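/- Let G₁, …, G_p (p ≥ 2) be nonempty connected interval graphs and let G be the graph obtained from the disjoint union G₁ ⊔ ⋯ ⊔ G_p by adding one new vertex w adjacent to all of their vertices. Then ν(G) = min over pairs of distinct indices s ≠ t of max({ν((G_s)_β), ν((G_t)_β)} ∪ {ν(G_i) + 1 : i ∉ {s, t}}). -/

import Mathlib

open Set

/-- An interval representation of a simple graph `G`: each vertex `v` gets a nonempty
closed interval `[l v, r v] ⊆ ℝ`, and two distinct vertices are adjacent iff their
intervals intersect. -/
structure IntervalRep {V : Type*} (G : SimpleGraph V) where
  l : V → ℝ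
  r : V → ℝ
  le : ∀ v, l v ≤ r v
  adj_iff : ∀ u v : V, u ≠ v →
    (G.Adj u v ↔ (Icc (l u) (r u) ∩ Icc (l v) (r v)).Nonempty)

namespace IntervalRep

variable {V : Type*} {G : SimpleGraph V}

/-- The interval of a vertex. -/
def itv (R : IntervalRep G) (v : V) : Set ℝ := Icc (R.l v) (R.r v)

/-- The nesting `ν(R)`: the maximum length of a chain of strictly nested vertex intervals. -/
noncomputable def nesting (R : IntervalRep G) : ℕ :=
  sSup {k : ℕ | ∃ f : Fin k → V, ∀ i j : Fin k, i < j → R.itv (f i) ⊂ R.itv (f j)}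

/-- `ν_R(x)`: the maximum length of a chain of strictly nested vertex intervals whose
outermost interval is `I(x)` (counting `x` itself). -/
noncomputable def nuAt (R : IntervalRep G) (x : V) : ℕ :=
  sSup {k : ℕ | ∃ f : Fin k → V,
    (∀ i j : Fin k, i < j → R.itv (f i) ⊂ R.itv (f j)) ∧
    ∃ h : 0 < k, f ⟨k - 1, by omega⟩ = x}

end IntervalRep

/-- A graph is an interval graph if it admits an interval representation. -/
def IsIntervalGraph {V : Type*} (G : SimpleGraph V) : Prop := Nonempty (IntervalRep G)

/-- The nesting number `ν(G)`: the minimum nesting over all interval representations. -/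
noncomputable def nu {V : Type*} (G : SimpleGraph V) : ℕ :=
  sInf {n : ℕ | ∃ R : IntervalRep G, R.nesting = n}

/-- `G_α`: add vertices `u, a₁, a₂, b₁, b₂` (coded as `0,1,2,3,4`), with `u` adjacent to all
of `G` and to `a₁, b₁`; `a₁ ~ a₂` and `b₁ ~ b₂`. -/
def Galpha {V : Type*} (G : SimpleGraph V) : SimpleGraph (V ⊕ Fin 5) :=
  SimpleGraph.fromRel fun x y =>
    match x, y with
    | Sum.inl a, Sum.inl b => G.Adj a b
    | Sum.inl _, Sum.inr i => i = 0
    | Sum.inr _, Sum.inl _ => False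
    | Sum.inr i, Sum.inr j =>
        i = 0 ∧ j = 1 ∨ i = 1 ∧ j = 2 ∨ i = 0 ∧ j = 3 ∨ i = 3 ∧ j = 4

/-- `G_β`: add vertices `u, a₁, a₂` (coded as `0,1,2`), with `u` adjacent to all of `G`
and to `a₁`; `a₁ ~ a₂`. -/
def Gbeta {V : Type*} (G : SimpleGraph V) : SimpleGraph (V ⊕ Fin 3) :=
  SimpleGraph.fromRel fun x y =>
    match x, y with
    | Sum.inl a, Sum.inl b => G.Adj a b
    | Sum.inl _, Sum.inr i => i = 0
    | Sum.inr _, Sum.inl _ => False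
    | Sum.inr i, Sum.inr j => i = 0 ∧ j = 1 ∨ i = 1 ∧ j = 2

/-- `G_γ`: add vertices `u, v, a₁, a₂, b₁, b₂` (coded as `0,1,2,3,4,5`), with `u ~ v`, both
adjacent to all of `G`; `u ~ a₁`, `a₁ ~ a₂`, `v ~ b₁`, `b₁ ~ b₂`. -/
def Ggamma {V : Type*} (G : SimpleGraph V) : SimpleGraph (V ⊕ Fin 6) :=
  SimpleGraph.fromRel fun x y =>
    match x, y with
    | Sum.inl a, Sum.inl b => G.Adj a b
    | Sum.inl _, Sum.inr i => i = 0 ∨ i = 1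
    | Sum.inr _, Sum.inl _ => False
    | Sum.inr i, Sum.inr j =>
        i = 0 ∧ j = 1 ∨ i = 0 ∧ j = 2 ∨ i = 2 ∧ j = 3 ∨ i = 1 ∧ j = 4 ∨ i = 4 ∧ j = 5

/-- The disjoint union of a family of graphs, on the sigma type of their vertex sets. -/
def sigmaGraph {p : ℕ} {V : Fin p → Type*} (G : ∀ i, SimpleGraph (V i)) :
    SimpleGraph (Σ i, V i) :=
  SimpleGraph.fromRel fun x y => ∃ h : x.1 = y.1, (G y.1).Adj (h ▸ x.2) y.2

/-- The graph obtained from `H` by adding one new vertex adjacent to every vertex of `H`. -/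
def joinVertex {W : Type*} (H : SimpleGraph W) : SimpleGraph (W ⊕ Unit) :=
  SimpleGraph.fromRel fun x y =>
    match x, y with
    | Sum.inl a, Sum.inl b => H.Adj a b
    | Sum.inl _, Sum.inr _ => True
    | _, _ => False

/-! ### Auxiliary infrastructure -/

section Aux

open Sum

/-- Characterization of nonempty intersection of two nonempty closed intervals. -/
lemma icc_inter_nonempty {a b c d : ℝ} (hab : a ≤ b) (hcd : c ≤ d) :
    (Icc a b ∩ Icc c d).Nonempty ↔ a ≤ d ∧ c ≤ b := by
  rw [Icc_inter_Icc, nonempty_Icc, max_le_iff, le_min_iff, le_min_iff]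
  constructor
  · rintro ⟨⟨-, h1⟩, h2, -⟩; exact ⟨h1, h2⟩
  · rintro ⟨h1, h2⟩; exact ⟨⟨hab, h1⟩, h2, hcd⟩

/-- Characterization of strict inclusion of nonempty closed intervals. -/
lemma icc_ssubset {a b c d : ℝ} (hab : a ≤ b) :
    Icc a b ⊂ Icc c d ↔ c ≤ a ∧ b ≤ d ∧ (c < a ∨ b < d) := by
  constructor
  · rintro ⟨hsub, hns⟩
    rw [Icc_subset_Icc_iff hab] at hsub
    refine ⟨hsub.1, hsub.2, ?_⟩
    by_contra hcon
    push_neg at hcon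
    exact hns (Icc_subset_Icc hcon.1 hcon.2)
  · rintro ⟨h1, h2, h3⟩
    refine ⟨Icc_subset_Icc h1 h2, fun hsub2 => ?_⟩
    have hcd : c ≤ d := h1.trans (hab.trans h2)
    have h4 := (Icc_subset_Icc_iff hcd).mp hsub2
    rcases h3 with h3 | h3 <;> linarith [h4.1, h4.2]

/-- Chains of strictly nested sets indexed by `Fin k`, with respect to an
assignment of sets. -/
def ChainOn {A : Type*} (J : A → Set ℝ) {k : ℕ} (f : Fin k → A) : Prop :=
  ∀ i j : Fin k, i < j → J (f i) ⊂ J (f j)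

lemma ChainOn.map {A B : Type*} {J : A → Set ℝ} {K : B → Set ℝ} {k : ℕ} {f : Fin k → A}
    (g : A → B) (hg : ∀ a b, J a ⊂ J b → K (g a) ⊂ K (g b)) (hf : ChainOn J f) :
    ChainOn K (g ∘ f) := fun i j hij => hg _ _ (hf i j hij)

/-- Append an element on top of a chain. -/
def snocFun {A : Type*} {k : ℕ} (f : Fin k → A) (z : A) : Fin (k + 1) → A :=
  fun i => if h : i.val < k then f ⟨i.val, h⟩ else z

lemma ChainOn.snoc {A : Type*} {J : A → Set ℝ} {k : ℕ} {f : Fin k → A}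
    (hf : ChainOn J f) {z : A} (hz : ∀ i, J (f i) ⊂ J z) :
    ChainOn J (snocFun f z) := by
  intro i j hij
  unfold snocFun
  by_cases hj : j.val < k
  · have hi : i.val < k := lt_trans hij hj
    simp only [hi, hj, dif_pos]
    exact hf ⟨i, hi⟩ ⟨j, hj⟩ hij
  · by_cases hi : i.val < k
    · simp only [hi, hj, dif_pos, dif_neg, not_false_iff]
      exact hz _
    · exfalso
      have : i.val = k := by omega
      have : j.val = k := by omega
      omega

namespace IntervalRep

variable {V : Type*} {G : SimpleGraph V}

lemma itv_nonempty (R : IntervalRep G) (v : V) : (R.itv v).Nonempty :=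
  nonempty_Icc.mpr (R.le v)

lemma adj_inter (R : IntervalRep G) {u v : V} (h : G.Adj u v) :
    (R.itv u ∩ R.itv v).Nonempty := (R.adj_iff u v h.ne).mp h

lemma not_adj_disjoint (R : IntervalRep G) {u v : V} (hne : u ≠ v) (h : ¬ G.Adj u v) :
    ¬ (R.itv u ∩ R.itv v).Nonempty := fun hc => h ((R.adj_iff u v hne).mpr hc)

lemma nesting_eq_sSup (R : IntervalRep G) :
    R.nesting = sSup {k : ℕ | ∃ f : Fin k → V, ChainOn R.itv f} := rfl

lemma chain_mem_le_card [Fintype V] (R : IntervalRep G) {k : ℕ} {f : Fin k → V}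
    (hf : ChainOn R.itv f) : k ≤ Fintype.card V := by
  have hinj : Function.Injective f := by
    intro i j hij
    rcases lt_trichotomy i j with h | h | h
    · exact absurd (hij ▸ hf i j h) (lt_irrefl _)
    · exact h
    · exact absurd (hij ▸ hf j i h) (lt_irrefl _)
  simpa using Fintype.card_le_of_injective f hinj

lemma bddAbove_chainSet [Fintype V] (R : IntervalRep G) :
    BddAbove {k : ℕ | ∃ f : Fin k → V, ChainOn R.itv f} := by
  refine ⟨Fintype.card V, fun k hk => ?_⟩
  obtain ⟨f, hf⟩ := hk
  exact R.chain_mem_le_card hf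

lemma le_nesting [Fintype V] (R : IntervalRep G) {k : ℕ} {f : Fin k → V}
    (hf : ChainOn R.itv f) : k ≤ R.nesting :=
  le_csSup R.bddAbove_chainSet ⟨f, hf⟩

lemma nesting_spec [Fintype V] (R : IntervalRep G) :
    ∃ f : Fin R.nesting → V, ChainOn R.itv f := by
  have h0 : {k : ℕ | ∃ f : Fin k → V, ChainOn R.itv f}.Nonempty :=
    ⟨0, Fin.elim0, fun i => i.elim0⟩
  exact Nat.sSup_mem h0 R.bddAbove_chainSet

lemma nesting_le [Fintype V] (R : IntervalRep G) {n : ℕ}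
    (h : ∀ k (f : Fin k → V), ChainOn R.itv f → k ≤ n) : R.nesting ≤ n := by
  obtain ⟨f, hf⟩ := R.nesting_spec
  exact h _ f hf

lemma one_le_nesting [Fintype V] [Nonempty V] (R : IntervalRep G) : 1 ≤ R.nesting :=
  R.le_nesting (f := fun _ : Fin 1 => Classical.arbitrary V)
    (fun i j hij => absurd (by omega : i.val < j.val) (by omega))

/-- The reflection of an interval representation. -/
def reflect (R : IntervalRep G) : IntervalRep G where
  l := fun v => -R.r v
  r := fun v => -R.l v
  le := fun v => by simpa using R.le v
  adj_iff := fun u v huv => by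
    rw [R.adj_iff u v huv, icc_inter_nonempty (R.le u) (R.le v),
      icc_inter_nonempty (by simpa using R.le u) (by simpa using R.le v)]
    constructor <;> rintro ⟨h1, h2⟩ <;> constructor <;> linarith

lemma reflect_itv (R : IntervalRep G) (v : V) :
    R.reflect.itv v = Icc (-R.r v) (-R.l v) := rfl

lemma nesting_reflect_le [Fintype V] (R : IntervalRep G) :
    R.reflect.nesting ≤ R.nesting := by
  refine R.reflect.nesting_le fun k f hf => R.le_nesting (f := f) fun i j hij => ?_
  have h := hf i j hij
  rw [reflect_itv, reflect_itv, icc_ssubset (by simpa using R.le (f i))] at h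
  rw [IntervalRep.itv, IntervalRep.itv, icc_ssubset (R.le (f i))]
  obtain ⟨h1, h2, h3⟩ := h
  refine ⟨by linarith, by linarith, ?_⟩
  rcases h3 with h | h
  · right; linarith
  · left; linarith

end IntervalRep

lemma nu_le {V : Type*} {G : SimpleGraph V} (R : IntervalRep G) : nu G ≤ R.nesting :=
  Nat.sInf_le ⟨R, rfl⟩

lemma exists_nu_rep {V : Type*} {G : SimpleGraph V} (h : IsIntervalGraph G) :
    ∃ R : IntervalRep G, R.nesting = nu G := by
  have : {n : ℕ | ∃ R : IntervalRep G, R.nesting = n}.Nonempty := by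
    obtain ⟨R⟩ := h; exact ⟨R.nesting, R, rfl⟩
  exact Nat.sInf_mem this

section Adj

open Sum

variable {W : Type*} {H : SimpleGraph W}

@[simp] lemma joinVertex_adj_inl_inl {a b : W} :
    (joinVertex H).Adj (inl a) (inl b) ↔ H.Adj a b := by
  simp only [joinVertex, SimpleGraph.fromRel_adj]
  constructor
  · rintro ⟨hne, h | h⟩
    · exact h
    · exact h.symm
  · intro h
    exact ⟨by simpa using h.ne, Or.inl h⟩

@[simp] lemma joinVertex_adj_inl_inr {a : W} (u : Unit) :
    (joinVertex H).Adj (inl a) (inr u) := by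
  simp only [joinVertex, SimpleGraph.fromRel_adj]
  exact ⟨by simp, Or.inl trivial⟩

@[simp] lemma joinVertex_adj_inr_inl {a : W} (u : Unit) :
    (joinVertex H).Adj (inr u) (inl a) := (joinVertex_adj_inl_inr u).symm

lemma joinVertex_not_adj_inr_inr (u v : Unit) :
    ¬ (joinVertex H).Adj (inr u) (inr v) := by
  simp only [joinVertex, SimpleGraph.fromRel_adj]
  rintro ⟨hne, h | h⟩ <;> exact h

variable {p : ℕ} {Vf : Fin p → Type*} {G : ∀ i, SimpleGraph (Vf i)}

@[simp] lemma sigmaGraph_adj_same {i : Fin p} {v v' : Vf i} :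
    (sigmaGraph G).Adj ⟨i, v⟩ ⟨i, v'⟩ ↔ (G i).Adj v v' := by
  unfold sigmaGraph
  rw [SimpleGraph.fromRel_adj]
  constructor
  · rintro ⟨hne, ⟨h, ha⟩ | ⟨h, ha⟩⟩
    · exact ha
    · exact ha.symm
  · intro h
    refine ⟨fun hc => ?_, Or.inl ⟨rfl, h⟩⟩
    have : v = v' := by
      have := Sigma.mk.inj_iff.mp hc
      exact eq_of_heq this.2
    exact h.ne this

lemma sigmaGraph_not_adj_ne {i j : Fin p} (hij : i ≠ j) (v : Vf i) (v' : Vf j) :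
    ¬ (sigmaGraph G).Adj ⟨i, v⟩ ⟨j, v'⟩ := by
  unfold sigmaGraph
  rw [SimpleGraph.fromRel_adj]
  rintro ⟨hne, ⟨h, -⟩ | ⟨h, -⟩⟩
  · exact hij h
  · exact hij h.symm

variable {U : Type*} {K : SimpleGraph U}

@[simp] lemma gbeta_adj_inl_inl {a b : U} :
    (Gbeta K).Adj (inl a) (inl b) ↔ K.Adj a b := by
  simp only [Gbeta, SimpleGraph.fromRel_adj]
  constructor
  · rintro ⟨hne, h | h⟩
    · exact h
    · exact h.symm
  · intro h
    exact ⟨by simpa using h.ne, Or.inl h⟩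

lemma gbeta_adj_inl_inr {a : U} {i : Fin 3} :
    (Gbeta K).Adj (inl a) (inr i) ↔ i = 0 := by
  simp only [Gbeta, SimpleGraph.fromRel_adj]
  constructor
  · rintro ⟨hne, h | h⟩
    · exact h
    · exact h.elim
  · intro h
    exact ⟨by simp, Or.inl h⟩

lemma gbeta_adj_inr_inr {i j : Fin 3} :
    (Gbeta K).Adj (inr i) (inr j) ↔
      (i = 0 ∧ j = 1 ∨ i = 1 ∧ j = 2 ∨ j = 0 ∧ i = 1 ∨ j = 1 ∧ i = 2) := by
  simp only [Gbeta, SimpleGraph.fromRel_adj]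
  constructor
  · rintro ⟨hne, h | h⟩
    · tauto
    · tauto
  · intro h
    refine ⟨?_, ?_⟩
    · rcases h with ⟨h1, h2⟩ | ⟨h1, h2⟩ | ⟨h1, h2⟩ | ⟨h1, h2⟩ <;> subst h1 <;> subst h2 <;> simp
    · tauto

/-- Walking along a graph whose adjacent vertices have intersecting intervals:
if the interval of the start contains a point `≤ x` and that of the end a point
`≥ x`, then some vertex interval contains `x`. -/
lemma walk_point {A : Type*} {H : SimpleGraph A} {l r : A → ℝ}
    (hadj : ∀ a b, H.Adj a b → (Icc (l a) (r a) ∩ Icc (l b) (r b)).Nonempty)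
    {x : ℝ} {a b : A} (W : H.Walk a b) :
    ∀ pa pb : ℝ, pa ∈ Icc (l a) (r a) → pb ∈ Icc (l b) (r b) → pa ≤ x → x ≤ pb →
    ∃ c, x ∈ Icc (l c) (r c) := by
  induction W with
  | nil =>
    intro pa pb hpa hpb h1 h2
    exact ⟨_, ⟨hpa.1.trans h1, h2.trans hpb.2⟩⟩
  | @cons u v w huv W ih =>
    intro pa pb hpa hpb h1 h2
    by_cases hx : x ≤ r u
    · exact ⟨u, ⟨hpa.1.trans h1, hx⟩⟩
    · push_neg at hx
      obtain ⟨y, hy1, hy2⟩ := hadj u v huv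
      exact ih y pb hy2 hpb (le_of_lt (lt_of_le_of_lt hy1.2 hx)) h2

end Adj

section MkBeta

open Sum

variable {U : Type*} [Fintype U] [Nonempty U] {K : SimpleGraph U}

/-- From a representation of `K`, build a representation of `K_β` whose nesting
is at most one more. -/
lemma exists_beta_rep (R : IntervalRep K) :
    ∃ R' : IntervalRep (Gbeta K), R'.nesting ≤ R.nesting + 1 := by
  classical
  set ml : ℝ := Finset.univ.inf' Finset.univ_nonempty R.l with hml
  set Mr : ℝ := Finset.univ.sup' Finset.univ_nonempty R.r with hMr
  have hl : ∀ v, ml ≤ R.l v := fun v => Finset.inf'_le _ (Finset.mem_univ v)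
  have hr : ∀ v, R.r v ≤ Mr := fun v => Finset.le_sup' _ (Finset.mem_univ v)
  have hmlMr : ml ≤ Mr := by
    obtain ⟨v⟩ := ‹Nonempty U›
    exact (hl v).trans ((R.le v).trans (hr v))
  set IL : U ⊕ Fin 3 → ℝ := Sum.elim R.l ![ml - 1, Mr + 1, Mr + 2] with hIL
  set IR : U ⊕ Fin 3 → ℝ := Sum.elim R.r ![Mr + 1, Mr + 2, Mr + 3] with hIR
  have hle : ∀ x, IL x ≤ IR x := by
    rintro (v | i)
    · exact R.le v
    · fin_cases i
      · show (ml - 1 : ℝ) ≤ Mr + 1; linarith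
      · show (Mr + 1 : ℝ) ≤ Mr + 2; linarith
      · show (Mr + 2 : ℝ) ≤ Mr + 3; linarith
  refine ⟨⟨IL, IR, hle, ?_⟩, ?_⟩
  · rintro (a | i) (b | j) hne
    · rw [gbeta_adj_inl_inl]
      exact R.adj_iff a b (fun h => hne (by rw [h]))
    · rw [gbeta_adj_inl_inr]
      fin_cases j
      · constructor
        · intro _
          exact (icc_inter_nonempty (R.le a)
            (show (ml - 1 : ℝ) ≤ Mr + 1 by linarith)).mpr
            ⟨by linarith [hr a, R.le a], by linarith [hl a, R.le a]⟩
        · intro _; rfl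
      · constructor
        · intro h; exact absurd h (by decide)
        · intro hcon
          have := (icc_inter_nonempty (R.le a)
            (show (Mr + 1 : ℝ) ≤ Mr + 2 by linarith)).mp hcon
          linarith [this.2, hr a]
      · constructor
        · intro h; exact absurd h (by decide)
        · intro hcon
          have := (icc_inter_nonempty (R.le a)
            (show (Mr + 2 : ℝ) ≤ Mr + 3 by linarith)).mp hcon
          linarith [this.2, hr a]
    · rw [SimpleGraph.adj_comm, Set.inter_comm, gbeta_adj_inl_inr]
      fin_cases i
      · constructor
        · intro _
          exact (icc_inter_nonempty (R.le b)
            (show (ml - 1 : ℝ) ≤ Mr + 1 by linarith)).mpr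
            ⟨by linarith [hr b, R.le b], by linarith [hl b, R.le b]⟩
        · intro _; rfl
      · constructor
        · intro h; exact absurd h (by decide)
        · intro hcon
          have := (icc_inter_nonempty (R.le b)
            (show (Mr + 1 : ℝ) ≤ Mr + 2 by linarith)).mp hcon
          linarith [this.2, hr b]
      · constructor
        · intro h; exact absurd h (by decide)
        · intro hcon
          have := (icc_inter_nonempty (R.le b)
            (show (Mr + 2 : ℝ) ≤ Mr + 3 by linarith)).mp hcon
          linarith [this.2, hr b]
    · rw [gbeta_adj_inr_inr]
      fin_cases i <;> fin_cases j
      · exact absurd rfl hne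
      · refine iff_of_true (by decide) ?_
        exact (icc_inter_nonempty (show (ml - 1 : ℝ) ≤ Mr + 1 by linarith)
          (show (Mr + 1 : ℝ) ≤ Mr + 2 by linarith)).mpr ⟨by linarith, by linarith⟩
      · refine iff_of_false (by decide) ?_
        intro hcon
        have := (icc_inter_nonempty (show (ml - 1 : ℝ) ≤ Mr + 1 by linarith)
          (show (Mr + 2 : ℝ) ≤ Mr + 3 by linarith)).mp hcon
        linarith [this.2]
      · refine iff_of_true (by decide) ?_
        exact (icc_inter_nonempty (show (Mr + 1 : ℝ) ≤ Mr + 2 by linarith)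
          (show (ml - 1 : ℝ) ≤ Mr + 1 by linarith)).mpr ⟨by linarith, by linarith⟩
      · exact absurd rfl hne
      · refine iff_of_true (by decide) ?_
        exact (icc_inter_nonempty (show (Mr + 1 : ℝ) ≤ Mr + 2 by linarith)
          (show (Mr + 2 : ℝ) ≤ Mr + 3 by linarith)).mpr ⟨by linarith, by linarith⟩
      · refine iff_of_false (by decide) ?_
        intro hcon
        have := (icc_inter_nonempty (show (Mr + 2 : ℝ) ≤ Mr + 3 by linarith)
          (show (ml - 1 : ℝ) ≤ Mr + 1 by linarith)).mp hcon
        linarith [this.1]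
      · refine iff_of_true (by decide) ?_
        exact (icc_inter_nonempty (show (Mr + 2 : ℝ) ≤ Mr + 3 by linarith)
          (show (Mr + 1 : ℝ) ≤ Mr + 2 by linarith)).mpr ⟨by linarith, by linarith⟩
      · exact absurd rfl hne
  · refine IntervalRep.nesting_le _ fun k f hf => ?_
    by_cases hk : k ≤ 1
    · omega
    push_neg at hk
    -- no chain element is a₁ = inr 1 : intervals incomparable with everything
    have hA : ∀ x : U ⊕ Fin 3,
        ¬ (Icc (IL x) (IR x) ⊂ Icc (Mr + 1) (Mr + 2)) := by
      rintro (v | m) hc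
      · have := (icc_ssubset (R.le v)).mp hc
        linarith [this.1, hr v, R.le v]
      · fin_cases m
        · have := (icc_ssubset (show (ml - 1 : ℝ) ≤ Mr + 1 by linarith)).mp hc
          linarith [this.1]
        · have := (icc_ssubset (show (Mr + 1 : ℝ) ≤ Mr + 2 by linarith)).mp hc
          rcases this.2.2 with h | h <;> linarith [this.1, this.2.1]
        · have := (icc_ssubset (show (Mr + 2 : ℝ) ≤ Mr + 3 by linarith)).mp hc
          linarith [this.2.1]
    have hA' : ∀ x : U ⊕ Fin 3,
        ¬ (Icc (Mr + 1) (Mr + 2) ⊂ Icc (IL x) (IR x)) := by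
      rintro (v | m) hc
      · have hc' : Icc (Mr + 1) (Mr + 2) ⊂ Icc (R.l v) (R.r v) := hc
        have := (icc_ssubset (show (Mr + 1 : ℝ) ≤ Mr + 2 by linarith)).mp hc'
        linarith [this.2.1, hr v]
      · fin_cases m
        · have hc' : Icc (Mr + 1) (Mr + 2) ⊂ Icc (ml - 1) (Mr + 1) := hc
          have := (icc_ssubset (show (Mr + 1 : ℝ) ≤ Mr + 2 by linarith)).mp hc'
          linarith [this.2.1]
        · have hc' : Icc (Mr + 1) (Mr + 2) ⊂ Icc (Mr + 1) (Mr + 2) := hc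
          have := (icc_ssubset (show (Mr + 1 : ℝ) ≤ Mr + 2 by linarith)).mp hc'
          rcases this.2.2 with h | h <;> linarith [this.1, this.2.1]
        · have hc' : Icc (Mr + 1) (Mr + 2) ⊂ Icc (Mr + 2) (Mr + 3) := hc
          have := (icc_ssubset (show (Mr + 1 : ℝ) ≤ Mr + 2 by linarith)).mp hc'
          linarith [this.1]
    have hB : ∀ x : U ⊕ Fin 3,
        ¬ (Icc (IL x) (IR x) ⊂ Icc (Mr + 2) (Mr + 3)) := by
      rintro (v | m) hc
      · have := (icc_ssubset (R.le v)).mp hc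
        linarith [this.1, hr v, R.le v]
      · fin_cases m
        · have := (icc_ssubset (show (ml - 1 : ℝ) ≤ Mr + 1 by linarith)).mp hc
          linarith [this.1]
        · have := (icc_ssubset (show (Mr + 1 : ℝ) ≤ Mr + 2 by linarith)).mp hc
          linarith [this.1]
        · have := (icc_ssubset (show (Mr + 2 : ℝ) ≤ Mr + 3 by linarith)).mp hc
          rcases this.2.2 with h | h <;> linarith [this.1, this.2.1]
    have hB' : ∀ x : U ⊕ Fin 3,
        ¬ (Icc (Mr + 2) (Mr + 3) ⊂ Icc (IL x) (IR x)) := by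
      rintro (v | m) hc
      · have hc' : Icc (Mr + 2) (Mr + 3) ⊂ Icc (R.l v) (R.r v) := hc
        have := (icc_ssubset (show (Mr + 2 : ℝ) ≤ Mr + 3 by linarith)).mp hc'
        linarith [this.2.1, hr v]
      · fin_cases m
        · have hc' : Icc (Mr + 2) (Mr + 3) ⊂ Icc (ml - 1) (Mr + 1) := hc
          have := (icc_ssubset (show (Mr + 2 : ℝ) ≤ Mr + 3 by linarith)).mp hc'
          linarith [this.2.1]
        · have hc' : Icc (Mr + 2) (Mr + 3) ⊂ Icc (Mr + 1) (Mr + 2) := hc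
          have := (icc_ssubset (show (Mr + 2 : ℝ) ≤ Mr + 3 by linarith)).mp hc'
          linarith [this.2.1]
        · have hc' : Icc (Mr + 2) (Mr + 3) ⊂ Icc (Mr + 2) (Mr + 3) := hc
          have := (icc_ssubset (show (Mr + 2 : ℝ) ≤ Mr + 3 by linarith)).mp hc'
          rcases this.2.2 with h | h <;> linarith [this.1, this.2.1]
    have hf01 : ∀ j : Fin k, (∃ v, f j = inl v) ∨ f j = inr 0 := by
      intro j
      rcases hfj : f j with v | m
      · exact Or.inl ⟨v, rfl⟩
      · right
        have hex : ∃ j' : Fin k, j' ≠ j := by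
          by_cases hj0 : j.val = 0
          · exact ⟨⟨1, by omega⟩, fun hcon => by
              have := congrArg Fin.val hcon; dsimp at this; omega⟩
          · exact ⟨⟨0, by omega⟩, fun hcon => by
              have := congrArg Fin.val hcon; dsimp at this; omega⟩
        obtain ⟨j', hj'⟩ := hex
        have hrel : Icc (IL (f j')) (IR (f j')) ⊂ Icc (IL (f j)) (IR (f j)) ∨
            Icc (IL (f j)) (IR (f j)) ⊂ Icc (IL (f j')) (IR (f j')) := by
          rcases lt_or_gt_of_ne hj' with h | h
          · exact Or.inl (hf j' j h)
          · exact Or.inr (hf j j' h)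
        rw [hfj] at hrel
        fin_cases m
        · rfl
        · exfalso
          rcases hrel with h | h
          · exact hA _ h
          · exact hA' _ h
        · exfalso
          rcases hrel with h | h
          · exact hB _ h
          · exact hB' _ h
    by_cases h0 : ∃ j : Fin k, f j = inr 0
    · obtain ⟨j0, hj0⟩ := h0
      have hlast : ∀ j : Fin k, f j = inr 0 → j.val = k - 1 := by
        intro j hj
        by_contra hcon
        have hjlt : j.val < k - 1 := by omega
        have hrel := hf j ⟨k - 1, by omega⟩ hjlt
        rw [hj] at hrel
        rcases hf01 ⟨k - 1, by omega⟩ with ⟨v, hv⟩ | hv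
        · rw [hv] at hrel
          have hrel' : Icc (ml - 1) (Mr + 1) ⊂ Icc (R.l v) (R.r v) := hrel
          have := (icc_ssubset (show (ml - 1 : ℝ) ≤ Mr + 1 by linarith)).mp hrel'
          linarith [this.1, hl v]
        · rw [hv] at hrel
          have hrel' : Icc (ml - 1) (Mr + 1) ⊂ Icc (ml - 1) (Mr + 1) := hrel
          have := (icc_ssubset (show (ml - 1 : ℝ) ≤ Mr + 1 by linarith)).mp hrel'
          rcases this.2.2 with h | h <;> linarith [this.1, this.2.1]
      have hemb : k - 1 ≤ k := by omega
      have hval : ∀ i : Fin (k - 1), ∃ v, f (Fin.castLE hemb i) = inl v := by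
        intro i
        rcases hf01 (Fin.castLE hemb i) with h | h
        · exact h
        · exfalso
          have := hlast _ h
          have hiv : (Fin.castLE hemb i).val = i.val := rfl
          omega
      choose vf hvf using hval
      have hchain : ChainOn R.itv vf := by
        intro i j hij
        have hrel := hf (Fin.castLE hemb i) (Fin.castLE hemb j) (by exact hij)
        rw [hvf i, hvf j] at hrel
        exact hrel
      have := R.le_nesting hchain
      omega
    · push_neg at h0
      have hval : ∀ i : Fin k, ∃ v, f i = inl v := fun i =>
        (hf01 i).resolve_right (h0 i)
      choose vf hvf using hval
      have hchain : ChainOn R.itv vf := by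
        intro i j hij
        have hrel := hf i j hij
        rw [hvf i, hvf j] at hrel
        exact hrel
      have := R.le_nesting hchain
      omega

lemma gbeta_isInterval (h : IsIntervalGraph K) : IsIntervalGraph (Gbeta K) := by
  obtain ⟨R⟩ := h
  obtain ⟨R', -⟩ := exists_beta_rep R
  exact ⟨R'⟩

lemma nu_gbeta_le (h : IsIntervalGraph K) : nu (Gbeta K) ≤ nu K + 1 := by
  obtain ⟨R, hR⟩ := exists_nu_rep h
  obtain ⟨R', hR'⟩ := exists_beta_rep R
  exact (nu_le R').trans (by omega)

end MkBeta

section Extract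

open Sum

variable {U : Type*} [Fintype U] [Nonempty U] {K : SimpleGraph U}

/-- Core of the β-extraction: if the special point `x` (in `I(u) ∖ ⋃ I(v)`) lies to the
right of all vertex intervals, extract normalized data. -/
lemma beta_extract_core (Rβ : IntervalRep (Gbeta K)) (x : ℝ)
    (hx : x ∈ Rβ.itv (inr 0)) (hside : ∀ v : U, Rβ.r (inl v) < x) :
    ∃ (L q : ℝ) (lf rf : U → ℝ),
      (∀ v, lf v ≤ rf v) ∧
      (∀ v w : U, v ≠ w → (K.Adj v w ↔ (Icc (lf v) (rf v) ∩ Icc (lf w) (rf w)).Nonempty)) ∧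
      L ≤ q ∧ (∀ v, rf v < q) ∧
      (∀ v, (Icc (lf v) (rf v) ∩ Icc L q).Nonempty) ∧
      (∀ (k : ℕ) (f : Fin k → U), ChainOn (fun v => Icc (lf v) (rf v)) f →
        k ≤ Rβ.nesting ∧
        ∀ (hk : 0 < k), L ≤ lf (f ⟨k - 1, by omega⟩) → k + 1 ≤ Rβ.nesting) := by
  refine ⟨Rβ.l (inr 0), x, fun v => Rβ.l (inl v), fun v => Rβ.r (inl v),
    fun v => Rβ.le (inl v), ?_, hx.1, hside, ?_, ?_⟩
  · intro v w hvw
    rw [← gbeta_adj_inl_inl (K := K)]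
    exact Rβ.adj_iff (inl v) (inl w) (fun h => hvw (by injection h))
  · intro v
    have hadj : (Gbeta K).Adj (inl v) (inr 0) := by rw [gbeta_adj_inl_inr]
    obtain ⟨y, hy1, hy2⟩ := Rβ.adj_inter hadj
    exact ⟨y, hy1, hy2.1, hy1.2.trans (le_of_lt (hside v))⟩
  · intro k f hf
    have hchain : ChainOn Rβ.itv (inl ∘ f) := fun i j hij => hf i j hij
    constructor
    · exact Rβ.le_nesting hchain
    · intro hk hL
      have htop : Rβ.itv (inl (f ⟨k - 1, by omega⟩)) ⊂ Rβ.itv (inr 0) := by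
        have : Icc (Rβ.l (inl (f ⟨k - 1, by omega⟩))) (Rβ.r (inl (f ⟨k - 1, by omega⟩))) ⊂
            Icc (Rβ.l (inr 0)) (Rβ.r (inr 0)) :=
          (icc_ssubset (Rβ.le _)).mpr
            ⟨hL, by linarith [hside (f ⟨k - 1, by omega⟩), hx.2],
              Or.inr (by linarith [hside (f ⟨k - 1, by omega⟩), hx.2])⟩
        exact this
      have hz : ∀ i : Fin k, Rβ.itv (inl (f i)) ⊂ Rβ.itv (inr 0) := by
        intro i
        by_cases hi : i.val = k - 1
        · have : i = ⟨k - 1, by omega⟩ := Fin.ext hi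
          rw [this]; exact htop
        · have hlt : i < (⟨k - 1, by omega⟩ : Fin k) := by
            have : i.val < k - 1 := by omega
            exact this
          exact (hchain i ⟨k - 1, by omega⟩ hlt).trans htop
      have := Rβ.le_nesting (ChainOn.snoc hchain hz)
      omega

/-- β-extraction, left version: a normalized picture of a representation of `K_β`
restricted to `K ∪ {u}`, with all vertex intervals strictly to the left of a point
`q` of `I(u) = [L, q]` (after possibly reflecting). -/
lemma beta_extract (hconn : K.Connected) (Rβ : IntervalRep (Gbeta K)) :
    ∃ (L q : ℝ) (lf rf : U → ℝ),
      (∀ v, lf v ≤ rf v) ∧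
      (∀ v w : U, v ≠ w → (K.Adj v w ↔ (Icc (lf v) (rf v) ∩ Icc (lf w) (rf w)).Nonempty)) ∧
      L ≤ q ∧ (∀ v, rf v < q) ∧
      (∀ v, (Icc (lf v) (rf v) ∩ Icc L q).Nonempty) ∧
      (∀ (k : ℕ) (f : Fin k → U), ChainOn (fun v => Icc (lf v) (rf v)) f →
        k ≤ Rβ.nesting ∧
        ∀ (hk : 0 < k), L ≤ lf (f ⟨k - 1, by omega⟩) → k + 1 ≤ Rβ.nesting) := by
  classical
  -- the special point x ∈ I(a₁) ∩ I(u)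
  have hadj01 : (Gbeta K).Adj (inr 0) (inr 1) := by
    rw [gbeta_adj_inr_inr]; tauto
  obtain ⟨x, hxu, hxa⟩ := Rβ.adj_inter hadj01
  -- x avoids every vertex interval
  have hxn : ∀ v : U, x ∉ Rβ.itv (inl v) := by
    intro v hv
    have : ¬ (Gbeta K).Adj (inl v) (inr 1) := by
      rw [gbeta_adj_inl_inr]; decide
    exact Rβ.not_adj_disjoint (by simp) this ⟨x, hv, hxa⟩
  have hsplit : ∀ v : U, Rβ.r (inl v) < x ∨ x < Rβ.l (inl v) := by
    intro v
    rcases lt_or_ge (Rβ.r (inl v)) x with h | h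
    · exact Or.inl h
    rcases lt_or_ge x (Rβ.l (inl v)) with h' | h'
    · exact Or.inr h'
    · exact absurd ⟨h', h⟩ (hxn v)
  have hadjK : ∀ a b : U, K.Adj a b →
      (Icc (Rβ.l (inl a)) (Rβ.r (inl a)) ∩ Icc (Rβ.l (inl b)) (Rβ.r (inl b))).Nonempty := by
    intro a b hab
    exact Rβ.adj_inter (gbeta_adj_inl_inl.mpr hab)
  -- dichotomy: all intervals on one side of x
  have hdich : (∀ v : U, Rβ.r (inl v) < x) ∨ (∀ v : U, x < Rβ.l (inl v)) := by
    by_contra hcon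
    push_neg at hcon
    obtain ⟨⟨v, hv⟩, w, hw⟩ := hcon
    have hv' : x < Rβ.l (inl v) := (hsplit v).resolve_left (not_lt.mpr hv)
    have hw' : Rβ.r (inl w) < x := (hsplit w).resolve_right (not_lt.mpr hw)
    obtain ⟨W⟩ := hconn w v
    obtain ⟨c, hc⟩ := walk_point hadjK W (Rβ.r (inl w)) (Rβ.l (inl v))
      ⟨Rβ.le _, le_refl _⟩ ⟨le_refl _, Rβ.le _⟩ (le_of_lt hw') (le_of_lt hv')
    exact hxn c hc
  rcases hdich with hside | hside
  · exact beta_extract_core Rβ x hxu hside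
  · -- use the reflected representation
    have hx' : -x ∈ Rβ.reflect.itv (inr 0) := by
      rw [IntervalRep.reflect_itv]
      exact ⟨by linarith [hxu.2], by linarith [hxu.1]⟩
    have hside' : ∀ v : U, Rβ.reflect.r (inl v) < -x := by
      intro v
      show -Rβ.l (inl v) < -x
      linarith [hside v]
    obtain ⟨L, q, lf, rf, h1, h2, h3, h4, h5, h6⟩ :=
      beta_extract_core Rβ.reflect (-x) hx' hside'
    refine ⟨L, q, lf, rf, h1, h2, h3, h4, h5, ?_⟩
    intro k f hf
    obtain ⟨hk1, hk2⟩ := h6 k f hf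
    exact ⟨hk1.trans Rβ.nesting_reflect_le,
      fun hk hL => (hk2 hk hL).trans Rβ.nesting_reflect_le⟩

/-- β-extraction, right (mirrored) version. -/
lemma beta_extract_right (hconn : K.Connected) (Rβ : IntervalRep (Gbeta K)) :
    ∃ (q Rr : ℝ) (lf rf : U → ℝ),
      (∀ v, lf v ≤ rf v) ∧
      (∀ v w : U, v ≠ w → (K.Adj v w ↔ (Icc (lf v) (rf v) ∩ Icc (lf w) (rf w)).Nonempty)) ∧
      q ≤ Rr ∧ (∀ v, q < lf v) ∧
      (∀ v, (Icc (lf v) (rf v) ∩ Icc q Rr).Nonempty) ∧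
      (∀ (k : ℕ) (f : Fin k → U), ChainOn (fun v => Icc (lf v) (rf v)) f →
        k ≤ Rβ.nesting ∧
        ∀ (hk : 0 < k), rf (f ⟨k - 1, by omega⟩) ≤ Rr → k + 1 ≤ Rβ.nesting) := by
  obtain ⟨L, q, lf, rf, h1, h2, h3, h4, h5, h6⟩ := beta_extract hconn Rβ
  refine ⟨-q, -L, fun v => -rf v, fun v => -lf v,
    fun v => by show -rf v ≤ -lf v; linarith [h1 v],
    ?_, by linarith, fun v => by show -q < -rf v; linarith [h4 v], ?_, ?_⟩
  · intro v w hvw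
    show K.Adj v w ↔ (Icc (-rf v) (-lf v) ∩ Icc (-rf w) (-lf w)).Nonempty
    rw [h2 v w hvw, icc_inter_nonempty (h1 v) (h1 w),
      icc_inter_nonempty (by linarith [h1 v] : -rf v ≤ -lf v) (by linarith [h1 w] : -rf w ≤ -lf w)]
    constructor <;> rintro ⟨ha, hb⟩ <;> constructor <;> linarith
  · intro v
    show (Icc (-rf v) (-lf v) ∩ Icc (-q) (-L)).Nonempty
    obtain ⟨y, hy1, hy2⟩ := h5 v
    exact ⟨-y, ⟨by linarith [hy1.2], by linarith [hy1.1]⟩,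
      ⟨by linarith [hy2.2], by linarith [hy2.1]⟩⟩
  · intro k f hf
    have hf' : ChainOn (fun v => Icc (lf v) (rf v)) f := by
      intro i j hij
      have hc : Icc (-rf (f i)) (-lf (f i)) ⊂ Icc (-rf (f j)) (-lf (f j)) := hf i j hij
      have := (icc_ssubset (by linarith [h1 (f i)] : -rf (f i) ≤ -lf (f i))).mp hc
      refine (icc_ssubset (h1 (f i))).mpr ⟨by linarith [this.1, this.2.1], by linarith [this.1, this.2.1], ?_⟩
      rcases this.2.2 with h | h
      · right; linarith
      · left; linarith
    obtain ⟨hk1, hk2⟩ := h6 k f hf'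
    refine ⟨hk1, fun hk hR => hk2 hk ?_⟩
    have : -lf (f ⟨k - 1, by omega⟩) ≤ -L := hR
    linarith

end Extract

section Affine

lemma affine_le {D : ℝ} (hD : 0 < D) (a m u v : ℝ) :
    a + (u - m) / D ≤ a + (v - m) / D ↔ u ≤ v := by
  rw [add_le_add_iff_left, div_le_div_iff_of_pos_right hD, sub_le_sub_iff_right]

lemma affine_lt {D : ℝ} (hD : 0 < D) (a m u v : ℝ) :
    a + (u - m) / D < a + (v - m) / D ↔ u < v := by
  rw [add_lt_add_iff_left, div_lt_div_iff_of_pos_right hD, sub_lt_sub_iff_right]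

lemma icc_shift_ssubset {x y x' y' c : ℝ} (h : x ≤ y) :
    Icc (x + c) (y + c) ⊂ Icc (x' + c) (y' + c) ↔ Icc x y ⊂ Icc x' y' := by
  rw [icc_ssubset (by linarith : x + c ≤ y + c), icc_ssubset h]
  constructor <;> rintro ⟨h1, h2, h3⟩ <;> refine ⟨by linarith, by linarith, ?_⟩ <;>
    rcases h3 with h3 | h3
  · left; linarith
  · right; linarith
  · left; linarith
  · right; linarith

lemma icc_shift_inter {x y x' y' c : ℝ} (h : x ≤ y) (h' : x' ≤ y') :
    (Icc (x + c) (y + c) ∩ Icc (x' + c) (y' + c)).Nonempty ↔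
      (Icc x y ∩ Icc x' y').Nonempty := by
  rw [icc_inter_nonempty (by linarith : x + c ≤ y + c) (by linarith : x' + c ≤ y' + c),
    icc_inter_nonempty h h']
  constructor <;> rintro ⟨h1, h2⟩ <;> exact ⟨by linarith, by linarith⟩

lemma icc_scale_ssubset {D : ℝ} (hD : 0 < D) {a m x y x' y' : ℝ} (h : x ≤ y) :
    Icc (a + (x - m) / D) (a + (y - m) / D) ⊂ Icc (a + (x' - m) / D) (a + (y' - m) / D) ↔
      Icc x y ⊂ Icc x' y' := by
  rw [icc_ssubset ((affine_le hD a m x y).mpr h), icc_ssubset h]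
  constructor <;> rintro ⟨h1, h2, h3⟩
  · refine ⟨(affine_le hD a m x' x).mp h1, (affine_le hD a m y y').mp h2, ?_⟩
    rcases h3 with h3 | h3
    · exact Or.inl ((affine_lt hD a m x' x).mp h3)
    · exact Or.inr ((affine_lt hD a m y y').mp h3)
  · refine ⟨(affine_le hD a m x' x).mpr h1, (affine_le hD a m y y').mpr h2, ?_⟩
    rcases h3 with h3 | h3
    · exact Or.inl ((affine_lt hD a m x' x).mpr h3)
    · exact Or.inr ((affine_lt hD a m y y').mpr h3)

lemma icc_scale_inter {D : ℝ} (hD : 0 < D) {a m x y x' y' : ℝ} (h : x ≤ y) (h' : x' ≤ y') :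
    (Icc (a + (x - m) / D) (a + (y - m) / D) ∩
      Icc (a + (x' - m) / D) (a + (y' - m) / D)).Nonempty ↔
      (Icc x y ∩ Icc x' y').Nonempty := by
  rw [icc_inter_nonempty ((affine_le hD a m x y).mpr h) ((affine_le hD a m x' y').mpr h'),
    icc_inter_nonempty h h']
  constructor <;> rintro ⟨h1, h2⟩
  · exact ⟨(affine_le hD a m x y').mp h1, (affine_le hD a m x' y).mp h2⟩
  · exact ⟨(affine_le hD a m x y').mpr h1, (affine_le hD a m x' y).mpr h2⟩

end Affine

section Dir1

open Sum

variable {p : ℕ} {V : Fin p → Type*} [∀ i, Fintype (V i)] [∀ i, Nonempty (V i)]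
  {G : ∀ i, SimpleGraph (V i)}

lemma dir1 (hp : 2 ≤ p) (hconn : ∀ i, (G i).Connected) (hG : ∀ i, IsIntervalGraph (G i))
    {s t : Fin p} (hst : s ≠ t) :
    IsIntervalGraph (joinVertex (sigmaGraph G)) ∧
    nu (joinVertex (sigmaGraph G)) ≤
      max (max (nu (Gbeta (G s))) (nu (Gbeta (G t))))
        ((Finset.univ \ {s, t}).sup fun i => nu (G i) + 1) := by
  classical
  set M := max (max (nu (Gbeta (G s))) (nu (Gbeta (G t))))
    ((Finset.univ \ {s, t}).sup fun i => nu (G i) + 1) with hM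
  -- optimal representations
  obtain ⟨Rs, hRs⟩ := exists_nu_rep (gbeta_isInterval (hG s))
  obtain ⟨Rt, hRt⟩ := exists_nu_rep (gbeta_isInterval (hG t))
  have hRi : ∀ i : Fin p, ∃ R : IntervalRep (G i), R.nesting = nu (G i) :=
    fun i => exists_nu_rep (hG i)
  choose Ri hRiEq using hRi
  -- extracted β-data
  obtain ⟨Ls, qs, lfs, rfs, hs1, hs2, hs3, hs4, hs5, hs6⟩ := beta_extract (hconn s) Rs
  obtain ⟨qt, Rt0, lft, rft, ht1, ht2, ht3, ht4, ht5, ht6⟩ := beta_extract_right (hconn t) Rt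
  -- geometry
  set Qt : ℝ := 4 * (p : ℝ) + 4 with hQt
  set cs : ℝ := -qs with hcs
  set ct : ℝ := Qt - qt with hct
  set wL : ℝ := Ls + cs with hwL
  set wR : ℝ := Rt0 + ct with hwR
  set mi : ∀ i : Fin p, ℝ := fun i => Finset.univ.inf' Finset.univ_nonempty (Ri i).l with hmi
  set Mi : ∀ i : Fin p, ℝ := fun i => Finset.univ.sup' Finset.univ_nonempty (Ri i).r with hMi
  set Di : ∀ i : Fin p, ℝ := fun i => Mi i - mi i + 1 with hDi
  have hmile : ∀ i (v : V i), mi i ≤ (Ri i).l v :=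
    fun i v => Finset.inf'_le _ (Finset.mem_univ v)
  have hMile : ∀ i (v : V i), (Ri i).r v ≤ Mi i :=
    fun i v => Finset.le_sup' _ (Finset.mem_univ v)
  have hmiMi : ∀ i, mi i ≤ Mi i := fun i => by
    obtain ⟨v⟩ := ‹∀ i, Nonempty (V i)› i
    exact (hmile i v).trans (((Ri i).le v).trans (hMile i v))
  have hD : ∀ i, (0 : ℝ) < Di i := fun i => by
    have := hmiMi i; rw [hDi]; dsimp; linarith
  have hip0 : ∀ i : Fin p, (0 : ℝ) ≤ (i : ℝ) := fun i => by positivity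
  have hip1 : ∀ i : Fin p, (i : ℝ) ≤ (p : ℝ) - 1 := fun i => by
    have : (i.val : ℝ) + 1 ≤ (p : ℝ) := by exact_mod_cast i.isLt
    linarith
  have hp0 : (0 : ℝ) < (p : ℝ) := by positivity
  have hQt0 : (0 : ℝ) < Qt := by rw [hQt]; positivity
  -- the interval assignment
  set CL : ∀ i : Fin p, V i → ℝ := fun i v =>
    if h : i = s then lfs (h ▸ v) + cs
    else if h' : i = t then lft (h' ▸ v) + ct
    else 2 + 4 * (i : ℝ) + ((Ri i).l v - mi i) / Di i with hCLdef
  set CR : ∀ i : Fin p, V i → ℝ := fun i v =>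
    if h : i = s then rfs (h ▸ v) + cs
    else if h' : i = t then rft (h' ▸ v) + ct
    else 2 + 4 * (i : ℝ) + ((Ri i).r v - mi i) / Di i with hCRdef
  have CLs : ∀ v : V s, CL s v = lfs v + cs := fun v => by
    simp only [hCLdef]; exact dif_pos trivial
  have CRs : ∀ v : V s, CR s v = rfs v + cs := fun v => by
    simp only [hCRdef]; exact dif_pos trivial
  have CLt : ∀ v : V t, CL t v = lft v + ct := fun v => by
    simp only [hCLdef]
    rw [dif_neg (fun h : t = s => hst h.symm)]
    exact dif_pos trivial
  have CRt : ∀ v : V t, CR t v = rft v + ct := fun v => by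
    simp only [hCRdef]
    rw [dif_neg (fun h : t = s => hst h.symm)]
    exact dif_pos trivial
  have CLmid : ∀ i, i ≠ s → i ≠ t → ∀ v : V i,
      CL i v = 2 + 4 * (i : ℝ) + ((Ri i).l v - mi i) / Di i := fun i h1 h2 v => by
    simp only [hCLdef]; rw [dif_neg h1]; exact dif_neg h2
  have CRmid : ∀ i, i ≠ s → i ≠ t → ∀ v : V i,
      CR i v = 2 + 4 * (i : ℝ) + ((Ri i).r v - mi i) / Di i := fun i h1 h2 v => by
    simp only [hCRdef]; rw [dif_neg h1]; exact dif_neg h2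
  -- basic bounds
  have hCLR : ∀ i (v : V i), CL i v ≤ CR i v := by
    intro i v
    by_cases h1 : i = s
    · subst h1; rw [CLs, CRs]; linarith [hs1 v]
    by_cases h2 : i = t
    · subst h2; rw [CLt, CRt]; linarith [ht1 v]
    rw [CLmid i h1 h2, CRmid i h1 h2]
    exact (affine_le (hD i) _ _ _ _).mpr ((Ri i).le v)
  have hs_bound : ∀ v : V s, CR s v < 0 := fun v => by
    rw [CRs]; rw [hcs]; linarith [hs4 v]
  have ht_bound : ∀ v : V t, Qt < CL t v := fun v => by
    rw [CLt]; rw [hct]; linarith [ht4 v]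
  have hmid_bound : ∀ i, i ≠ s → i ≠ t → ∀ v : V i,
      2 + 4 * (i : ℝ) ≤ CL i v ∧ CR i v ≤ 3 + 4 * (i : ℝ) := by
    intro i h1 h2 v
    rw [CLmid i h1 h2, CRmid i h1 h2]
    constructor
    · have : (0 : ℝ) ≤ ((Ri i).l v - mi i) / Di i :=
        div_nonneg (by linarith [hmile i v]) (le_of_lt (hD i))
      linarith
    · have : ((Ri i).r v - mi i) / Di i ≤ 1 := by
        rw [div_le_one (hD i)]
        rw [hDi]; dsimp; linarith [hMile i v]
      linarith
  have hwLwR : wL ≤ 0 ∧ Qt ≤ wR := by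
    constructor
    · rw [hwL, hcs]; linarith [hs3]
    · rw [hwR, hct]; linarith [ht3]
  -- disjointness of distinct components
  have hdisj : ∀ i (v : V i) j (w : V j), i ≠ j →
      ¬ (Icc (CL i v) (CR i v) ∩ Icc (CL j w) (CR j w)).Nonempty := by
    have key : ∀ i (v : V i) j (w : V j), i ≠ j →
        (∀ y : ℝ, y ∈ Icc (CL i v) (CR i v) → y ∈ Icc (CL j w) (CR j w) → False) := by
      intro i v j w hij y hyi hyj
      by_cases h1 : i = s
      · replace h1 := h1.symm; subst h1
        by_cases h2 : j = t
        · replace h2 := h2.symm; subst h2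
          exact absurd (hyj.1.trans' (le_of_lt (ht_bound w)))
            (not_le.mpr (by linarith [hyi.2, hs_bound v, hQt0]))
        · have h3 : j ≠ s := fun h => hij h.symm
          have := (hmid_bound j h3 h2 w).1
          linarith [hyi.2, hs_bound v, hyj.1, hip0 j]
      by_cases h2 : i = t
      · replace h2 := h2.symm; subst h2
        by_cases h3 : j = s
        · replace h3 := h3.symm; subst h3
          linarith [hyj.2, hs_bound w, hyi.1, ht_bound v, hQt0]
        · have h4 : j ≠ t := fun h => hij h.symm
          have := (hmid_bound j h3 h4 w).2
          have hj1 := hip1 j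
          linarith [hyi.1, ht_bound v, hyj.2]
      · have hbi := hmid_bound i h1 h2 v
        by_cases h3 : j = s
        · replace h3 := h3.symm; subst h3
          linarith [hyj.2, hs_bound w, hyi.1, hbi.1, hip0 i]
        by_cases h4 : j = t
        · subst h4
          have hi1 := hip1 i
          linarith [hyj.1, ht_bound w, hyi.2, hbi.2]
        · have hbj := hmid_bound j h3 h4 w
          have hvij : i.val ≠ j.val := fun h => hij (Fin.ext h)
          rcases lt_or_gt_of_ne hvij with h | h
          · have : (i : ℝ) + 1 ≤ (j : ℝ) := by exact_mod_cast h
            linarith [hyi.2, hbi.2, hyj.1, hbj.1]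
          · have : (j : ℝ) + 1 ≤ (i : ℝ) := by exact_mod_cast h
            linarith [hyi.1, hbi.1, hyj.2, hbj.2]
    intro i v j w hij ⟨y, hy1, hy2⟩
    exact key i v j w hij y hy1 hy2
  -- w's interval meets every vertex interval
  have hwmeet : ∀ i (v : V i), (Icc (CL i v) (CR i v) ∩ Icc wL wR).Nonempty := by
    intro i v
    by_cases h1 : i = s
    · replace h1 := h1.symm; subst h1
      obtain ⟨y, hy1, hy2⟩ := hs5 v
      refine ⟨y + cs, ?_, ?_⟩
      · rw [CLs, CRs]; exact ⟨by linarith [hy1.1], by linarith [hy1.2]⟩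
      · constructor
        · rw [hwL]; linarith [hy2.1]
        · have := hwLwR.2
          have : y + cs ≤ 0 := by rw [hcs]; linarith [hy2.2]
          linarith [hwLwR.2, hQt0]
    by_cases h2 : i = t
    · replace h2 := h2.symm; subst h2
      obtain ⟨y, hy1, hy2⟩ := ht5 v
      refine ⟨y + ct, ?_, ?_⟩
      · rw [CLt, CRt]; exact ⟨by linarith [hy1.1], by linarith [hy1.2]⟩
      · constructor
        · have : Qt ≤ y + ct := by rw [hct]; linarith [hy2.1]
          linarith [hwLwR.1, hQt0]
        · rw [hwR]; linarith [hy2.2]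
    · obtain ⟨hbl, hbr⟩ := hmid_bound i h1 h2 v
      refine ⟨CL i v, ⟨le_refl _, hCLR i v⟩, ?_, ?_⟩
      · linarith [hwLwR.1, hip0 i]
      · have := hip1 i
        linarith [hwLwR.2, hCLR i v, hbr]
  -- the fields of the representation
  set Lfun : (Σ i, V i) ⊕ Unit → ℝ :=
    Sum.elim (fun x => CL x.1 x.2) (fun _ => wL) with hLfun
  set Rfun : (Σ i, V i) ⊕ Unit → ℝ :=
    Sum.elim (fun x => CR x.1 x.2) (fun _ => wR) with hRfun
  have hle' : ∀ x, Lfun x ≤ Rfun x := by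
    rintro (⟨i, v⟩ | u)
    · exact hCLR i v
    · show wL ≤ wR
      linarith [hwLwR.1, hwLwR.2, hQt0]
  have hadj' : ∀ x y, x ≠ y → ((joinVertex (sigmaGraph G)).Adj x y ↔
      (Icc (Lfun x) (Rfun x) ∩ Icc (Lfun y) (Rfun y)).Nonempty) := by
    rintro (⟨i, v⟩ | u) (⟨j, w⟩ | u') hne
    · show _ ↔ (Icc (CL i v) (CR i v) ∩ Icc (CL j w) (CR j w)).Nonempty
      by_cases hij : i = j
      · subst hij
        have hvw : v ≠ w := by
          intro h; exact hne (by rw [h])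
        rw [joinVertex_adj_inl_inl, sigmaGraph_adj_same]
        by_cases h1 : i = s
        · replace h1 := h1.symm; subst h1
          rw [CLs v, CRs v, CLs w, CRs w, hs2 v w hvw]
          exact (icc_shift_inter (hs1 v) (hs1 w)).symm
        by_cases h2 : i = t
        · replace h2 := h2.symm; subst h2
          rw [CLt v, CRt v, CLt w, CRt w, ht2 v w hvw]
          exact (icc_shift_inter (ht1 v) (ht1 w)).symm
        · rw [CLmid i h1 h2 v, CRmid i h1 h2 v, CLmid i h1 h2 w, CRmid i h1 h2 w,
            (Ri i).adj_iff v w hvw]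
          exact (icc_scale_inter (hD i) ((Ri i).le v) ((Ri i).le w)).symm
      · refine iff_of_false ?_ (hdisj i v j w hij)
        rw [joinVertex_adj_inl_inl]
        exact sigmaGraph_not_adj_ne hij v w
    · refine iff_of_true (joinVertex_adj_inl_inr u') ?_
      exact hwmeet i v
    · refine iff_of_true (joinVertex_adj_inr_inl u) ?_
      rw [Set.inter_comm]
      exact hwmeet j w
    · exfalso; cases u; cases u'; exact hne rfl
  set R' : IntervalRep (joinVertex (sigmaGraph G)) := ⟨Lfun, Rfun, hle', hadj'⟩ with hR'
  refine ⟨⟨R'⟩, le_trans (nu_le R') (R'.nesting_le fun k f hf => ?_)⟩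
  -- bounds on M
  have hM1 : nu (Gbeta (G s)) ≤ M := le_trans (le_max_left _ _) (le_max_left _ _)
  have hM2 : nu (Gbeta (G t)) ≤ M := le_trans (le_max_right _ _) (le_max_left _ _)
  have hM3 : ∀ i, i ≠ s → i ≠ t → nu (G i) + 1 ≤ M := by
    intro i h1 h2
    refine le_trans (Finset.le_sup (f := fun i => nu (G i) + 1) ?_) (le_max_right _ _)
    simp [h1, h2]
  have hMpos : 1 ≤ M := le_trans (hRs ▸ Rs.one_le_nesting) hM1
  by_cases hk0 : k = 0
  · omega
  by_cases hk1 : k = 1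
  · omega
  have hk2 : 2 ≤ k := by omega
  -- the universal vertex can only be the top of a chain
  have hwlast : ∀ j : Fin k, f j = inr () → j.val = k - 1 := by
    intro j hj
    by_contra hcon
    have hlt : j < (⟨k - 1, by omega⟩ : Fin k) := by
      show j.val < k - 1; omega
    have hrel := hf j ⟨k - 1, by omega⟩ hlt
    rw [hj] at hrel
    rcases hfj : f ⟨k - 1, by omega⟩ with ⟨i, v⟩ | u
    · rw [hfj] at hrel
      have hrel' : Icc wL wR ⊂ Icc (CL i v) (CR i v) := hrel
      have hwle : wL ≤ wR := hle' (inr ())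
      have hh := (icc_ssubset hwle).mp hrel'
      by_cases h1 : i = s
      · replace h1 := h1.symm; subst h1
        linarith [hh.2.1, hs_bound v, hwLwR.2, hQt0]
      by_cases h2 : i = t
      · replace h2 := h2.symm; subst h2
        linarith [hh.1, ht_bound v, hwLwR.1, hQt0]
      · have := (hmid_bound i h1 h2 v).1
        linarith [hh.1, hwLwR.1, hip0 i]
    · cases u
      rw [hfj] at hrel
      exact absurd hrel (ssubset_irrefl _)
  -- all non-universal chain elements lie in a single component
  have hsame : ∀ (j j' : Fin k) (y y' : Σ i, V i),
      f j = inl y → f j' = inl y' → y.1 = y'.1 := by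
    intro j j' y y' hy hy'
    by_contra hne'
    rcases lt_trichotomy j j' with h | h | h
    · have hrel := hf j j' h
      rw [hy, hy'] at hrel
      have hrel' : Icc (CL y.1 y.2) (CR y.1 y.2) ⊂ Icc (CL y'.1 y'.2) (CR y'.1 y'.2) := hrel
      obtain ⟨z, hz⟩ := nonempty_Icc.mpr (hCLR y.1 y.2)
      exact hdisj y.1 y.2 y'.1 y'.2 hne' ⟨z, hz, hrel'.subset hz⟩
    · rw [h] at hy
      rw [hy] at hy'
      exact hne' (by rw [inl.injEq] at hy'; rw [hy'])
    · have hrel := hf j' j h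
      rw [hy, hy'] at hrel
      have hrel' : Icc (CL y'.1 y'.2) (CR y'.1 y'.2) ⊂ Icc (CL y.1 y.2) (CR y.1 y.2) := hrel
      obtain ⟨z, hz⟩ := nonempty_Icc.mpr (hCLR y'.1 y'.2)
      exact hdisj y.1 y.2 y'.1 y'.2 hne' ⟨z, hrel'.subset hz, hz⟩
  -- chain transfer for a fixed component
  have transfer : ∀ (k' : ℕ) (g : Fin k' → Fin k) (i0 : Fin p) (vf : Fin k' → V i0),
      (∀ a b : Fin k', a < b → g a < g b) →
      (∀ a : Fin k', f (g a) = inl ⟨i0, vf a⟩) →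
      ChainOn (fun v : V i0 => Icc (CL i0 v) (CR i0 v)) vf := by
    intro k' g i0 vf hmono hval a b hab
    have hrel := hf (g a) (g b) (hmono a b hab)
    rw [hval a, hval b] at hrel
    exact hrel
  -- conclusion for a chain living inside a single component
  have concl : ∀ (k' : ℕ) (i0 : Fin p) (vf : Fin k' → V i0) (hk' : 0 < k'),
      ChainOn (fun v : V i0 => Icc (CL i0 v) (CR i0 v)) vf →
      k' ≤ M ∧
        (Icc (CL i0 (vf ⟨k' - 1, by omega⟩)) (CR i0 (vf ⟨k' - 1, by omega⟩)) ⊂ Icc wL wR →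
          k' + 1 ≤ M) := by
    intro k' i0 vf hk' hchain0
    by_cases h1 : i0 = s
    · replace h1 := h1.symm; subst h1
      have hchain : ChainOn (fun v : V s => Icc (lfs v) (rfs v)) vf := by
        intro a b hab
        have this' : Icc (CL s (vf a)) (CR s (vf a)) ⊂ Icc (CL s (vf b)) (CR s (vf b)) :=
          hchain0 a b hab
        rw [CLs (vf a), CRs (vf a), CLs (vf b), CRs (vf b)] at this'
        exact (icc_shift_ssubset (hs1 (vf a))).mp this'
      obtain ⟨hb1, hb2⟩ := hs6 k' vf hchain
      constructor
      · exact le_trans hb1 (le_trans (le_of_eq hRs) hM1)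
      · intro hup
        have h2' := ((icc_ssubset (hCLR _ _)).mp hup).1
        rw [CLs] at h2'
        have hLs : Ls ≤ lfs (vf ⟨k' - 1, by omega⟩) := by
          rw [hwL] at h2'; linarith
        exact le_trans (hb2 hk' hLs) (le_trans (le_of_eq hRs) hM1)
    by_cases h2 : i0 = t
    · replace h2 := h2.symm; subst h2
      have hchain : ChainOn (fun v : V t => Icc (lft v) (rft v)) vf := by
        intro a b hab
        have this' : Icc (CL t (vf a)) (CR t (vf a)) ⊂ Icc (CL t (vf b)) (CR t (vf b)) :=
          hchain0 a b hab
        rw [CLt (vf a), CRt (vf a), CLt (vf b), CRt (vf b)] at this'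
        exact (icc_shift_ssubset (ht1 (vf a))).mp this'
      obtain ⟨hb1, hb2⟩ := ht6 k' vf hchain
      constructor
      · exact le_trans hb1 (le_trans (le_of_eq hRt) hM2)
      · intro hup
        have h2' := ((icc_ssubset (hCLR _ _)).mp hup).2.1
        rw [CRt] at h2'
        have hRt' : rft (vf ⟨k' - 1, by omega⟩) ≤ Rt0 := by
          rw [hwR] at h2'; linarith
        exact le_trans (hb2 hk' hRt') (le_trans (le_of_eq hRt) hM2)
    · have hchain : ChainOn (Ri i0).itv vf := by
        intro a b hab
        have this' : Icc (CL i0 (vf a)) (CR i0 (vf a)) ⊂ Icc (CL i0 (vf b)) (CR i0 (vf b)) :=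
          hchain0 a b hab
        rw [CLmid i0 h1 h2 (vf a), CRmid i0 h1 h2 (vf a), CLmid i0 h1 h2 (vf b),
          CRmid i0 h1 h2 (vf b)] at this'
        exact (icc_scale_ssubset (hD i0) ((Ri i0).le (vf a))).mp this'
      have hb1 := (Ri i0).le_nesting hchain
      have hb3 := hM3 i0 h1 h2
      rw [hRiEq i0] at hb1
      exact ⟨by omega, fun _ => by omega⟩
  by_cases hw : ∃ j : Fin k, f j = inr ()
  · -- a chain with the universal vertex on top
    obtain ⟨j0, hj0⟩ := hw
    have hj0v : j0.val = k - 1 := hwlast j0 hj0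
    have hemb : k - 1 ≤ k := by omega
    have hval : ∀ idx : Fin (k - 1), ∃ y : Σ i, V i, f (Fin.castLE hemb idx) = inl y := by
      intro idx
      rcases hy : f (Fin.castLE hemb idx) with y | u
      · exact ⟨y, rfl⟩
      · cases u
        have h5 := hwlast _ hy
        have h6 : (Fin.castLE hemb idx).val = idx.val := rfl
        omega
    choose yf hyf using hval
    have h0lt : 0 < k - 1 := by omega
    obtain ⟨i0, hi0⟩ : ∃ a : Fin p, (yf ⟨0, h0lt⟩).1 = a := ⟨_, rfl⟩
    have hvali : ∀ idx : Fin (k - 1), ∃ v : V i0, f (Fin.castLE hemb idx) = inl ⟨i0, v⟩ := by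
      intro idx
      have hi := hsame (Fin.castLE hemb idx) (Fin.castLE hemb ⟨0, h0lt⟩) (yf idx)
        (yf ⟨0, h0lt⟩) (hyf idx) (hyf ⟨0, h0lt⟩)
      have hy := hyf idx
      rcases hyq : yf idx with ⟨iy, vy⟩
      rw [hyq] at hy hi
      dsimp at hi
      rw [hi0] at hi
      subst hi
      exact ⟨vy, hy⟩
    choose vf hvf using hvali
    have hchain0 : ChainOn (fun v : V i0 => Icc (CL i0 v) (CR i0 v)) vf :=
      transfer (k - 1) (Fin.castLE hemb) i0 vf (fun a b hab => hab) hvf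
    have key : ∀ idx : Fin (k - 1), Fin.castLE hemb idx < j0 →
        Icc (CL i0 (vf idx)) (CR i0 (vf idx)) ⊂ Icc wL wR := by
      intro idx hlt
      have hreltop := hf _ _ hlt
      rw [hvf idx, hj0] at hreltop
      exact hreltop
    have hup := key ⟨k - 1 - 1, by omega⟩ (by
      have hj0e : j0 = (⟨k - 1, by omega⟩ : Fin k) := Fin.ext hj0v
      rw [hj0e]
      show k - 1 - 1 < k - 1
      omega)
    have := (concl (k - 1) i0 vf h0lt hchain0).2 hup
    omega
  · push_neg at hw
    have hval : ∀ j : Fin k, ∃ y : Σ i, V i, f j = inl y := by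
      intro j
      rcases hy : f j with y | u
      · exact ⟨y, rfl⟩
      · cases u; exact absurd hy (hw j)
    choose yf hyf using hval
    have h0lt : 0 < k := by omega
    obtain ⟨i0, hi0⟩ : ∃ a : Fin p, (yf ⟨0, h0lt⟩).1 = a := ⟨_, rfl⟩
    have hvali : ∀ idx : Fin k, ∃ v : V i0, f idx = inl ⟨i0, v⟩ := by
      intro idx
      have hi := hsame idx ⟨0, h0lt⟩ (yf idx) (yf ⟨0, h0lt⟩) (hyf idx) (hyf ⟨0, h0lt⟩)
      have hy := hyf idx
      rcases hyq : yf idx with ⟨iy, vy⟩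
      rw [hyq] at hy hi
      dsimp at hi
      rw [hi0] at hi
      subst hi
      exact ⟨vy, hy⟩
    choose vf hvf using hvali
    have hchain0 : ChainOn (fun v : V i0 => Icc (CL i0 v) (CR i0 v)) vf :=
      transfer k (fun a => a) i0 vf (fun a b hab => hab) hvf
    exact (concl k i0 vf h0lt hchain0).1

end Dir1

section Dir2

open Sum

variable {p : ℕ} {V : Fin p → Type*} [∀ i, Fintype (V i)] [∀ i, Nonempty (V i)]
  {G : ∀ i, SimpleGraph (V i)}

lemma fin_two (hp : 2 ≤ p) (a : Fin p) : ∃ b : Fin p, b ≠ a := by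
  by_cases h : a.val = 0
  · exact ⟨⟨1, by omega⟩, fun hc => by
      have := congrArg Fin.val hc; dsimp at this; omega⟩
  · exact ⟨⟨0, by omega⟩, fun hc => by
      have := congrArg Fin.val hc; dsimp at this; omega⟩

lemma join_w_meets (R : IntervalRep (joinVertex (sigmaGraph G))) (y : Σ i, V i) :
    (R.itv (inl y) ∩ R.itv (inr ())).Nonempty :=
  R.adj_inter (joinVertex_adj_inl_inr ())

lemma join_disj (R : IntervalRep (joinVertex (sigmaGraph G))) {i j : Fin p}
    (hij : i ≠ j) (v : V i) (w : V j) :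
    ¬ (R.itv (inl ⟨i, v⟩) ∩ R.itv (inl ⟨j, w⟩)).Nonempty := by
  refine R.not_adj_disjoint ?_ ?_
  · intro h
    injection h with h2
    exact hij (congrArg Sigma.fst h2)
  · rw [joinVertex_adj_inl_inl]
    exact sigmaGraph_not_adj_ne hij v w

lemma join_LwRw (hp : 2 ≤ p) (R : IntervalRep (joinVertex (sigmaGraph G))) :
    R.l (inr ()) < R.r (inr ()) := by
  rcases lt_or_ge (R.l (inr ())) (R.r (inr ())) with h | h
  · exact h
  have heq : R.l (inr ()) = R.r (inr ()) := le_antisymm (R.le _) h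
  exfalso
  have h0 : (0 : ℕ) < p := by omega
  have h1 : (1 : ℕ) < p := by omega
  set i : Fin p := ⟨0, h0⟩
  set j : Fin p := ⟨1, h1⟩
  have hij : i ≠ j := fun hc => by
    have := congrArg Fin.val hc; simp [i, j] at this
  obtain ⟨v⟩ := ‹∀ i, Nonempty (V i)› i
  obtain ⟨w⟩ := ‹∀ i, Nonempty (V i)› j
  obtain ⟨y1, hy11, hy12⟩ := join_w_meets R ⟨i, v⟩
  obtain ⟨y2, hy21, hy22⟩ := join_w_meets R ⟨j, w⟩
  have e1 : y1 = R.l (inr ()) := le_antisymm (heq ▸ hy12.2) hy12.1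
  have e2 : y2 = R.l (inr ()) := le_antisymm (heq ▸ hy22.2) hy22.1
  exact join_disj R hij v w ⟨y1, hy11, by rw [e1, ← e2]; exact hy21⟩

/-- If every interval of component `i` is contained in the interval of the universal
vertex, a longest chain of the component extends by the universal vertex. -/
lemma join_nested_bound (hp : 2 ≤ p) (R : IntervalRep (joinVertex (sigmaGraph G)))
    (i : Fin p) (hsub : ∀ v : V i, R.itv (inl ⟨i, v⟩) ⊆ R.itv (inr ())) :
    nu (G i) + 1 ≤ R.nesting := by
  classical
  -- restriction of R to the component
  have hadjres : ∀ v w : V i, v ≠ w →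
      ((G i).Adj v w ↔ (Icc (R.l (inl ⟨i, v⟩)) (R.r (inl ⟨i, v⟩)) ∩
        Icc (R.l (inl ⟨i, w⟩)) (R.r (inl ⟨i, w⟩))).Nonempty) := by
    intro v w hvw
    have hne : (inl ⟨i, v⟩ : (Σ i, V i) ⊕ Unit) ≠ inl ⟨i, w⟩ := by
      intro h
      injection h with h2
      exact hvw (by
        have := Sigma.mk.inj_iff.mp h2
        exact eq_of_heq this.2)
    rw [← sigmaGraph_adj_same (G := G), ← joinVertex_adj_inl_inl (H := sigmaGraph G)]
    exact R.adj_iff _ _ hne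
  set Rres : IntervalRep (G i) :=
    ⟨fun v => R.l (inl ⟨i, v⟩), fun v => R.r (inl ⟨i, v⟩), fun v => R.le _, hadjres⟩ with hRres
  obtain ⟨f, hf⟩ := Rres.nesting_spec
  -- extend by the universal vertex
  obtain ⟨j, hj⟩ := fin_two hp i
  obtain ⟨x⟩ := ‹∀ i, Nonempty (V i)› j
  obtain ⟨y, hy1, hy2⟩ := join_w_meets R ⟨j, x⟩
  have hfR : ChainOn R.itv (fun idx => (inl ⟨i, f idx⟩ : (Σ i, V i) ⊕ Unit)) :=
    fun a b hab => hf a b hab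
  have hz : ∀ idx, R.itv (inl ⟨i, f idx⟩) ⊂ R.itv (inr ()) := by
    intro idx
    refine (hsub (f idx)).ssubset_of_ne ?_
    intro heq
    exact join_disj R (fun h => hj h.symm) (f idx) x ⟨y, heq ▸ hy2, hy1⟩
  have hchain := ChainOn.snoc hfR hz
  have hlen := R.le_nesting hchain
  have : nu (G i) ≤ Rres.nesting := nu_le Rres
  omega

/-- If component `i` sticks out to the left of the universal interval, then
`ν((G i)_β)` is at most the nesting of `R`. -/
lemma join_stick_bound (hp : 2 ≤ p) (hconn : ∀ i, (G i).Connected)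
    (R : IntervalRep (joinVertex (sigmaGraph G))) (i : Fin p)
    (hstick : ∃ v : V i, R.l (inl ⟨i, v⟩) < R.l (inr ())) :
    nu (Gbeta (G i)) ≤ R.nesting := by
  classical
  set Lw : ℝ := R.l (inr ()) with hLw
  set Rw : ℝ := R.r (inr ()) with hRw
  have hLR : Lw < Rw := join_LwRw hp R
  obtain ⟨v0, hv0⟩ := hstick
  obtain ⟨j, hj⟩ := fin_two hp i
  obtain ⟨x⟩ := ‹∀ i, Nonempty (V i)› j
  obtain ⟨y, hy1, hy2⟩ := join_w_meets R ⟨j, x⟩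
  have hy2' : Lw ≤ y ∧ y ≤ Rw := ⟨hy2.1, hy2.2⟩
  -- all intervals of the component lie strictly to the left of y
  have hadjW : ∀ a b : V i, (G i).Adj a b →
      (Icc (R.l (inl ⟨i, a⟩)) (R.r (inl ⟨i, a⟩)) ∩
        Icc (R.l (inl ⟨i, b⟩)) (R.r (inl ⟨i, b⟩))).Nonempty := by
    intro a b hab
    exact R.adj_inter (joinVertex_adj_inl_inl.mpr (sigmaGraph_adj_same.mpr hab))
  have hub : ∀ v : V i, R.r (inl ⟨i, v⟩) < y := by
    intro v
    by_contra hcon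
    push_neg at hcon
    -- Lw belongs to I(v₀)
    obtain ⟨z, hz1, hz2⟩ := join_w_meets R ⟨i, v0⟩
    have hLwv0 : Lw ∈ Icc (R.l (inl ⟨i, v0⟩)) (R.r (inl ⟨i, v0⟩)) :=
      ⟨le_of_lt hv0, le_trans hz2.1 hz1.2⟩
    obtain ⟨W⟩ := hconn i v0 v
    obtain ⟨c, hc⟩ := walk_point hadjW W Lw (max y (R.l (inl ⟨i, v⟩))) hLwv0
      ⟨le_max_right _ _, max_le hcon (R.le _)⟩ hy2'.1 (le_max_left _ _)
    exact join_disj R (fun h => hj h.symm) c x ⟨y, hc, hy1⟩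
  -- build a β-representation from the restriction
  set BL : V i ⊕ Fin 3 → ℝ :=
    Sum.elim (fun v => R.l (inl ⟨i, v⟩)) ![Lw, Rw, Rw + 1] with hBL
  set BR : V i ⊕ Fin 3 → ℝ :=
    Sum.elim (fun v => R.r (inl ⟨i, v⟩)) ![Rw, Rw + 1, Rw + 2] with hBR
  have hble : ∀ x, BL x ≤ BR x := by
    rintro (v | m)
    · exact R.le _
    · fin_cases m
      · show Lw ≤ Rw; linarith
      · show Rw ≤ Rw + 1; linarith
      · show Rw + 1 ≤ Rw + 2; linarith
  have hbadj : ∀ x y', x ≠ y' → ((Gbeta (G i)).Adj x y' ↔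
      (Icc (BL x) (BR x) ∩ Icc (BL y') (BR y')).Nonempty) := by
    rintro (a | m) (b | m') hne
    · rw [gbeta_adj_inl_inl]
      have hne' : (inl ⟨i, a⟩ : (Σ i, V i) ⊕ Unit) ≠ inl ⟨i, b⟩ := by
        intro h
        injection h with h2
        refine hne ?_
        have := Sigma.mk.inj_iff.mp h2
        rw [eq_of_heq this.2]
      constructor
      · intro h
        exact R.adj_inter (joinVertex_adj_inl_inl.mpr (sigmaGraph_adj_same.mpr h))
      · intro h
        have h2 := (R.adj_iff _ _ hne').mpr h
        rw [joinVertex_adj_inl_inl, sigmaGraph_adj_same] at h2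
        exact h2
    · rw [gbeta_adj_inl_inr]
      fin_cases m'
      · refine iff_of_true rfl ?_
        exact join_w_meets R ⟨i, a⟩
      · refine iff_of_false (by decide) ?_
        intro hcon
        have := (icc_inter_nonempty (R.le (inl ⟨i, a⟩))
          (show Rw ≤ Rw + 1 by linarith)).mp hcon
        linarith [this.2, hub a, hy2'.2]
      · refine iff_of_false (by decide) ?_
        intro hcon
        have := (icc_inter_nonempty (R.le (inl ⟨i, a⟩))
          (show Rw + 1 ≤ Rw + 2 by linarith)).mp hcon
        linarith [this.2, hub a, hy2'.2]
    · rw [SimpleGraph.adj_comm, Set.inter_comm, gbeta_adj_inl_inr]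
      fin_cases m
      · refine iff_of_true rfl ?_
        exact join_w_meets R ⟨i, b⟩
      · refine iff_of_false (by decide) ?_
        intro hcon
        have := (icc_inter_nonempty (R.le (inl ⟨i, b⟩))
          (show Rw ≤ Rw + 1 by linarith)).mp hcon
        linarith [this.2, hub b, hy2'.2]
      · refine iff_of_false (by decide) ?_
        intro hcon
        have := (icc_inter_nonempty (R.le (inl ⟨i, b⟩))
          (show Rw + 1 ≤ Rw + 2 by linarith)).mp hcon
        linarith [this.2, hub b, hy2'.2]
    · rw [gbeta_adj_inr_inr]
      fin_cases m <;> fin_cases m'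
      · exact absurd rfl hne
      · refine iff_of_true (by decide) ?_
        exact (icc_inter_nonempty (show Lw ≤ Rw by linarith)
          (show Rw ≤ Rw + 1 by linarith)).mpr ⟨by linarith, by linarith⟩
      · refine iff_of_false (by decide) ?_
        intro hcon
        have := (icc_inter_nonempty (show Lw ≤ Rw by linarith)
          (show Rw + 1 ≤ Rw + 2 by linarith)).mp hcon
        linarith [this.2]
      · refine iff_of_true (by decide) ?_
        exact (icc_inter_nonempty (show Rw ≤ Rw + 1 by linarith)
          (show Lw ≤ Rw by linarith)).mpr ⟨by linarith, by linarith⟩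
      · exact absurd rfl hne
      · refine iff_of_true (by decide) ?_
        exact (icc_inter_nonempty (show Rw ≤ Rw + 1 by linarith)
          (show Rw + 1 ≤ Rw + 2 by linarith)).mpr ⟨by linarith, by linarith⟩
      · refine iff_of_false (by decide) ?_
        intro hcon
        have := (icc_inter_nonempty (show Rw + 1 ≤ Rw + 2 by linarith)
          (show Lw ≤ Rw by linarith)).mp hcon
        linarith [this.1]
      · refine iff_of_true (by decide) ?_
        exact (icc_inter_nonempty (show Rw + 1 ≤ Rw + 2 by linarith)
          (show Rw ≤ Rw + 1 by linarith)).mpr ⟨by linarith, by linarith⟩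
      · exact absurd rfl hne
  set Rbeta : IntervalRep (Gbeta (G i)) := ⟨BL, BR, hble, hbadj⟩ with hRbeta
  refine le_trans (nu_le Rbeta) (Rbeta.nesting_le fun k g hg => ?_)
  -- incomparability of the pendant intervals
  have ha1 : ∀ x, ¬ (Icc (BL x) (BR x) ⊂ Icc Rw (Rw + 1)) := by
    rintro (a | m) hc
    · have := (icc_ssubset (R.le (inl ⟨i, a⟩))).mp hc
      linarith [this.1, hub a, hy2'.2, R.le (inl ⟨i, a⟩)]
    · fin_cases m
      · have hc' : Icc Lw Rw ⊂ Icc Rw (Rw + 1) := hc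
        have := (icc_ssubset (show Lw ≤ Rw by linarith)).mp hc'
        linarith [this.1]
      · have hc' : Icc Rw (Rw + 1) ⊂ Icc Rw (Rw + 1) := hc
        exact absurd hc' (ssubset_irrefl _)
      · have hc' : Icc (Rw + 1) (Rw + 2) ⊂ Icc Rw (Rw + 1) := hc
        have := (icc_ssubset (show Rw + 1 ≤ Rw + 2 by linarith)).mp hc'
        linarith [this.2.1]
  have ha1' : ∀ x, ¬ (Icc Rw (Rw + 1) ⊂ Icc (BL x) (BR x)) := by
    rintro (a | m) hc
    · have hc' : Icc Rw (Rw + 1) ⊂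
          Icc (R.l (inl ⟨i, a⟩)) (R.r (inl ⟨i, a⟩)) := hc
      have := (icc_ssubset (show Rw ≤ Rw + 1 by linarith)).mp hc'
      linarith [this.2.1, hub a, hy2'.2]
    · fin_cases m
      · have hc' : Icc Rw (Rw + 1) ⊂ Icc Lw Rw := hc
        have := (icc_ssubset (show Rw ≤ Rw + 1 by linarith)).mp hc'
        linarith [this.2.1]
      · have hc' : Icc Rw (Rw + 1) ⊂ Icc Rw (Rw + 1) := hc
        exact absurd hc' (ssubset_irrefl _)
      · have hc' : Icc Rw (Rw + 1) ⊂ Icc (Rw + 1) (Rw + 2) := hc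
        have := (icc_ssubset (show Rw ≤ Rw + 1 by linarith)).mp hc'
        linarith [this.1]
  have ha2 : ∀ x, ¬ (Icc (BL x) (BR x) ⊂ Icc (Rw + 1) (Rw + 2)) := by
    rintro (a | m) hc
    · have := (icc_ssubset (R.le (inl ⟨i, a⟩))).mp hc
      linarith [this.1, hub a, hy2'.2, R.le (inl ⟨i, a⟩)]
    · fin_cases m
      · have hc' : Icc Lw Rw ⊂ Icc (Rw + 1) (Rw + 2) := hc
        have := (icc_ssubset (show Lw ≤ Rw by linarith)).mp hc'
        linarith [this.1]
      · have hc' : Icc Rw (Rw + 1) ⊂ Icc (Rw + 1) (Rw + 2) := hc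
        have := (icc_ssubset (show Rw ≤ Rw + 1 by linarith)).mp hc'
        linarith [this.1]
      · have hc' : Icc (Rw + 1) (Rw + 2) ⊂ Icc (Rw + 1) (Rw + 2) := hc
        exact absurd hc' (ssubset_irrefl _)
  have ha2' : ∀ x, ¬ (Icc (Rw + 1) (Rw + 2) ⊂ Icc (BL x) (BR x)) := by
    rintro (a | m) hc
    · have hc' : Icc (Rw + 1) (Rw + 2) ⊂
          Icc (R.l (inl ⟨i, a⟩)) (R.r (inl ⟨i, a⟩)) := hc
      have := (icc_ssubset (show Rw + 1 ≤ Rw + 2 by linarith)).mp hc'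
      linarith [this.2.1, hub a, hy2'.2]
    · fin_cases m
      · have hc' : Icc (Rw + 1) (Rw + 2) ⊂ Icc Lw Rw := hc
        have := (icc_ssubset (show Rw + 1 ≤ Rw + 2 by linarith)).mp hc'
        linarith [this.2.1]
      · have hc' : Icc (Rw + 1) (Rw + 2) ⊂ Icc Rw (Rw + 1) := hc
        have := (icc_ssubset (show Rw + 1 ≤ Rw + 2 by linarith)).mp hc'
        linarith [this.2.1]
      · have hc' : Icc (Rw + 1) (Rw + 2) ⊂ Icc (Rw + 1) (Rw + 2) := hc
        exact absurd hc' (ssubset_irrefl _)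
  -- map the chain into R
  have hmap : ∀ x y' : V i ⊕ Fin 3, Rbeta.itv x ⊂ Rbeta.itv y' →
      R.itv (Sum.elim (fun a => (inl ⟨i, a⟩ : (Σ i, V i) ⊕ Unit)) (fun _ => inr ()) x) ⊂
      R.itv (Sum.elim (fun a => (inl ⟨i, a⟩ : (Σ i, V i) ⊕ Unit)) (fun _ => inr ()) y') := by
    rintro (a | m) (b | m') hc
    · exact hc
    · fin_cases m'
      · exact hc
      · exact absurd (show Icc (BL (inl a)) (BR (inl a)) ⊂ Icc Rw (Rw + 1) from hc)
          (ha1 (inl a))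
      · exact absurd (show Icc (BL (inl a)) (BR (inl a)) ⊂ Icc (Rw + 1) (Rw + 2) from hc)
          (ha2 (inl a))
    · fin_cases m
      · exact hc
      · exact absurd (show Icc Rw (Rw + 1) ⊂ Icc (BL (inl b)) (BR (inl b)) from hc)
          (ha1' (inl b))
      · exact absurd (show Icc (Rw + 1) (Rw + 2) ⊂ Icc (BL (inl b)) (BR (inl b)) from hc)
          (ha2' (inl b))
    · fin_cases m
      · fin_cases m'
        · exact absurd (show Icc Lw Rw ⊂ Icc Lw Rw from hc) (ssubset_irrefl _)
        · exact absurd (show Icc (BL (inr 0)) (BR (inr 0)) ⊂ Icc Rw (Rw + 1) from hc)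
            (ha1 (inr 0))
        · exact absurd (show Icc (BL (inr 0)) (BR (inr 0)) ⊂ Icc (Rw + 1) (Rw + 2) from hc)
            (ha2 (inr 0))
      · exact absurd (show Icc Rw (Rw + 1) ⊂ Icc (BL (inr m')) (BR (inr m')) from hc)
          (ha1' (inr m'))
      · exact absurd (show Icc (Rw + 1) (Rw + 2) ⊂ Icc (BL (inr m')) (BR (inr m')) from hc)
          (ha2' (inr m'))
  exact R.le_nesting (ChainOn.map _ hmap hg)

lemma dir2 (hp : 2 ≤ p) (hconn : ∀ i, (G i).Connected)
    (hG : ∀ i, IsIntervalGraph (G i))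
    (hIG : IsIntervalGraph (joinVertex (sigmaGraph G))) :
    ∃ s t : Fin p, s ≠ t ∧
      max (max (nu (Gbeta (G s))) (nu (Gbeta (G t))))
        ((Finset.univ \ {s, t}).sup fun i => nu (G i) + 1) ≤
      nu (joinVertex (sigmaGraph G)) := by
  classical
  obtain ⟨R, hR⟩ := exists_nu_rep hIG
  set Lw : ℝ := R.l (inr ()) with hLw
  set Rw : ℝ := R.r (inr ()) with hRw
  set StL : Fin p → Prop := fun i => ∃ v : V i, R.l (inl ⟨i, v⟩) < Lw with hStL
  set StR : Fin p → Prop := fun i => ∃ v : V i, Rw < R.r (inl ⟨i, v⟩) with hStR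
  -- a left-sticking component owns the point Lw
  have hLmem : ∀ i, StL i → ∃ v : V i, Lw ∈ R.itv (inl ⟨i, v⟩) := by
    intro i hi
    simp only [hStL] at hi
    obtain ⟨v, hv⟩ := hi
    obtain ⟨z, hz1, hz2⟩ := join_w_meets R ⟨i, v⟩
    exact ⟨v, ⟨le_of_lt hv, le_trans hz2.1 hz1.2⟩⟩
  have hRmem : ∀ i, StR i → ∃ v : V i, Rw ∈ R.itv (inl ⟨i, v⟩) := by
    intro i hi
    simp only [hStR] at hi
    obtain ⟨v, hv⟩ := hi
    obtain ⟨z, hz1, hz2⟩ := join_w_meets R ⟨i, v⟩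
    exact ⟨v, ⟨le_trans hz1.1 hz2.2, le_of_lt hv⟩⟩
  have hLuniq : ∀ i j, StL i → StL j → i = j := by
    intro i j hi hj
    by_contra hij
    obtain ⟨v, hv⟩ := hLmem i hi
    obtain ⟨w, hw⟩ := hLmem j hj
    exact join_disj R hij v w ⟨Lw, hv, hw⟩
  have hRuniq : ∀ i j, StR i → StR j → i = j := by
    intro i j hi hj
    by_contra hij
    obtain ⟨v, hv⟩ := hRmem i hi
    obtain ⟨w, hw⟩ := hRmem j hj
    exact join_disj R hij v w ⟨Rw, hv, hw⟩
  have hnotboth : ∀ i, StL i → StR i → False := by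
    intro i hi hi'
    obtain ⟨v, hv⟩ := hLmem i hi
    obtain ⟨w, hw⟩ := hRmem i hi'
    obtain ⟨j, hj⟩ := fin_two hp i
    obtain ⟨x⟩ := ‹∀ i, Nonempty (V i)› j
    obtain ⟨y, hy1, hy2⟩ := join_w_meets R ⟨j, x⟩
    have hadjW : ∀ a b : V i, (G i).Adj a b →
        (Icc (R.l (inl ⟨i, a⟩)) (R.r (inl ⟨i, a⟩)) ∩
          Icc (R.l (inl ⟨i, b⟩)) (R.r (inl ⟨i, b⟩))).Nonempty := by
      intro a b hab
      exact R.adj_inter (joinVertex_adj_inl_inl.mpr (sigmaGraph_adj_same.mpr hab))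
    obtain ⟨W⟩ := hconn i v w
    obtain ⟨c, hc⟩ := walk_point hadjW W Lw Rw hv hw hy2.1 hy2.2
    exact join_disj R (fun h => hj h.symm) c x ⟨y, hc, hy1⟩
  -- the non-sticking components are nested in the universal interval
  have hnest : ∀ i, ¬ StL i → ¬ StR i →
      ∀ v : V i, R.itv (inl ⟨i, v⟩) ⊆ R.itv (inr ()) := by
    intro i hiL hiR v
    simp only [hStL] at hiL
    simp only [hStR] at hiR
    push_neg at hiL hiR
    exact Icc_subset_Icc (hiL v) (hiR v)
  -- bounds for the two sorts of components
  have hboundL : ∀ i, (∀ j, StR j → j = i → False) → nu (Gbeta (G i)) ≤ R.nesting := by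
    intro i hnotR
    by_cases hiL : StL i
    · exact join_stick_bound hp hconn R i (by simpa only [hStL] using hiL)
    · have hiR : ¬ StR i := fun h => hnotR i h rfl
      have h1 := join_nested_bound hp R i (hnest i hiL hiR)
      have h2 := nu_gbeta_le (hG i)
      omega
  have hboundR : ∀ i, (∀ j, StL j → j = i → False) → nu (Gbeta (G i)) ≤ R.nesting := by
    intro i hnotL
    by_cases hiR : StR i
    · -- use the reflected representation
      have hiR' : ∃ v : V i, Rw < R.r (inl ⟨i, v⟩) := by simpa only [hStR] using hiR
      obtain ⟨v, hv⟩ := hiR'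
      have hstick' : ∃ v : V i, R.reflect.l (inl ⟨i, v⟩) < R.reflect.l (inr ()) :=
        ⟨v, by show -R.r (inl ⟨i, v⟩) < -R.r (inr ()); rw [hRw] at hv; linarith⟩
      exact le_trans (join_stick_bound hp hconn R.reflect i hstick')
        R.nesting_reflect_le
    · have hiL : ¬ StL i := fun h => hnotL i h rfl
      have h1 := join_nested_bound hp R i (hnest i hiL hiR)
      have h2 := nu_gbeta_le (hG i)
      omega
  -- choose the two distinguished components
  have hsel : ∃ s t : Fin p, s ≠ t ∧ (∀ i, StL i → i = s) ∧ (∀ i, StR i → i = t) := by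
    by_cases hL : ∃ i, StL i
    · obtain ⟨s0, hs0⟩ := hL
      by_cases hRR : ∃ i, StR i
      · obtain ⟨t0, ht0⟩ := hRR
        refine ⟨s0, t0, ?_, fun i hi => hLuniq i s0 hi hs0, fun i hi => hRuniq i t0 hi ht0⟩
        intro h
        exact hnotboth s0 hs0 (h ▸ ht0)
      · push_neg at hRR
        obtain ⟨t0, ht0⟩ := fin_two hp s0
        exact ⟨s0, t0, fun h => ht0 h.symm, fun i hi => hLuniq i s0 hi hs0,
          fun i hi => absurd hi (hRR i)⟩
    · push_neg at hL
      by_cases hRR : ∃ i, StR i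
      · obtain ⟨t0, ht0⟩ := hRR
        obtain ⟨s0, hs0⟩ := fin_two hp t0
        exact ⟨s0, t0, hs0, fun i hi => absurd hi (hL i),
          fun i hi => hRuniq i t0 hi ht0⟩
      · push_neg at hRR
        have h0 : (0 : ℕ) < p := by omega
        have h1 : (1 : ℕ) < p := by omega
        refine ⟨⟨0, h0⟩, ⟨1, h1⟩, fun hc => ?_, fun i hi => absurd hi (hL i),
          fun i hi => absurd hi (hRR i)⟩
        have := congrArg Fin.val hc; dsimp at this; omega
  obtain ⟨s, t, hst, hselL, hselR⟩ := hsel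
  refine ⟨s, t, hst, ?_⟩
  rw [← hR]
  refine max_le (max_le ?_ ?_) ?_
  · exact hboundL s (fun j hj hjeq => hst (((hselR j hj) ▸ hjeq : t = s)).symm)
  · exact hboundR t (fun j hj hjeq => hst ((hselL j hj) ▸ hjeq : s = t))
  · refine Finset.sup_le fun i hi => ?_
    rw [Finset.mem_sdiff, Finset.mem_insert, Finset.mem_singleton] at hi
    push_neg at hi
    have hiL : ¬ StL i := fun h => hi.2.1 (hselL i h)
    have hiR : ¬ StR i := fun h => hi.2.2 (hselR i h)
    exact join_nested_bound hp R i (hnest i hiL hiR)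

end Dir2

/-- for nonempty connected interval graphs `G₁, …, G_p` (`p ≥ 2`) and `G`
their disjoint union plus a universal vertex `w`,
`ν(G) = min_{s ≠ t} max({ν((G_s)_β), ν((G_t)_β)} ∪ {ν(G_i) + 1 : i ∉ {s,t}})`. -/
theorem stmt_13 {p : ℕ} (hp : 2 ≤ p) {V : Fin p → Type*} [∀ i, Fintype (V i)]
    [∀ i, Nonempty (V i)] (G : ∀ i, SimpleGraph (V i))
    (hconn : ∀ i, (G i).Connected) (hG : ∀ i, IsIntervalGraph (G i)) :
    nu (joinVertex (sigmaGraph G)) =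
      sInf {m : ℕ | ∃ s t : Fin p, s ≠ t ∧
        m = max (max (nu (Gbeta (G s))) (nu (Gbeta (G t))))
          ((Finset.univ \ {s, t}).sup fun i => nu (G i) + 1)} := by
  have h0 : (0 : ℕ) < p := by omega
  have h1 : (1 : ℕ) < p := by omega
  have hst01 : (⟨0, h0⟩ : Fin p) ≠ ⟨1, h1⟩ := fun hc => by
    have := congrArg Fin.val hc; dsimp at this; omega
  have hne : {m : ℕ | ∃ s t : Fin p, s ≠ t ∧
      m = max (max (nu (Gbeta (G s))) (nu (Gbeta (G t))))
        ((Finset.univ \ {s, t}).sup fun i => nu (G i) + 1)}.Nonempty :=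
    ⟨_, ⟨0, h0⟩, ⟨1, h1⟩, hst01, rfl⟩
  apply le_antisymm
  · obtain ⟨s, t, hst, heq⟩ := Nat.sInf_mem hne
    rw [heq]
    exact (dir1 hp hconn hG hst).2
  · obtain ⟨s, t, hst, hle⟩ := dir2 hp hconn hG (dir1 hp hconn hG hst01).1
    exact le_trans (Nat.sInf_le ⟨s, t, hst, rfl⟩) hle
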